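/- Let i, j ∈ I with i ≠ j, and assume 𝔡(𝔞−𝔡)+𝔟𝔠 = 0 and f_i(e_{α_j}) = f_j(e_{α_i}) = 0. (i) If m_{i,j} = 2, then ψ_iψ_j = ψ_jψ_i if and only if f_i∘φ_j = 𝔡f_i and f_j∘φ_i = 𝔡f_j. (ii) If m_{i,j} = 3, then f_i∘φ_j = f_j∘φ_i implies ψ_iψ_jψ_i = ψ_jψ_iψ_j; conversely, if 𝔠 is a unit of 𝔯, then ψ_iψ_jψ_i = ψ_jψ_iψ_j implies f_i∘φ_j = f_j∘φ_i. -/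

import Mathlib

set_option maxRecDepth 4000

namespace LK

/-! ### Coxeter matrices -/

/-- A Coxeter matrix on an index set `I` (entry `0` encodes `∞`). -/
structure CoxM (I : Type) where
  m : I → I → ℕ
  symm : ∀ i j, m i j = m j i
  one_iff : ∀ i j, m i j = 1 ↔ i = j

variable {I : Type}

/-- A Coxeter matrix is of small type if all its entries belong to `{1,2,3}`. -/
def CoxM.Small (M : CoxM I) : Prop := ∀ i j, M.m i j = 1 ∨ M.m i j = 2 ∨ M.m i j = 3

/-- The alternating word `i j i j ⋯` with `k` letters. -/
def braidList (k : ℕ) (i j : I) : List I :=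
  (List.range k).map (fun n => if n % 2 = 0 then i else j)

/-- The braid word `s_i s_j s_i ⋯` (`k` letters) in the free monoid. -/
def braidWord (k : ℕ) (i j : I) : FreeMonoid I := FreeMonoid.ofList (braidList k i j)

/-- The braid relations defining the Artin–Tits monoid. -/
def artinRel (M : CoxM I) : FreeMonoid I → FreeMonoid I → Prop :=
  fun x y => ∃ i j, M.m i j ≠ 0 ∧ x = braidWord (M.m i j) i j ∧ y = braidWord (M.m i j) j i

/-- The congruence on the free monoid generated by the braid relations. -/
def artinCon (M : CoxM I) : Con (FreeMonoid I) := conGen (artinRel M)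

/-- The Artin–Tits monoid `B⁺` of a Coxeter matrix. -/
def AM (M : CoxM I) := (artinCon M).Quotient

instance (M : CoxM I) : Monoid (AM M) := inferInstanceAs (Monoid (artinCon M).Quotient)

/-- The standard generators of the Artin–Tits monoid. -/
def gen (M : CoxM I) (i : I) : AM M := (artinCon M).mk' (FreeMonoid.of i)

/-- `I(b) = {i ∈ I ∣ s_i ≼ b}`, where `≼` is left divisibility. -/
def IdxSet (M : CoxM I) (x : AM M) : Set I := {i | gen M i ∣ x}

/-- The braid word `s_i s_j s_i ⋯` (`k` letters) in the free group. -/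
def braidWordG (k : ℕ) (i j : I) : FreeGroup I := ((braidList k i j).map FreeGroup.of).prod

/-- The braid relators defining the Artin–Tits group. -/
def artinGRels (M : CoxM I) : Set (FreeGroup I) :=
  {r | ∃ i j, M.m i j ≠ 0 ∧ r = braidWordG (M.m i j) i j * (braidWordG (M.m i j) j i)⁻¹}

/-- The Artin–Tits group `B` of a Coxeter matrix. -/
def AG (M : CoxM I) := PresentedGroup (artinGRels M)

instance (M : CoxM I) : Group (AG M) := inferInstanceAs (Group (PresentedGroup _))

/-- The standard generators of the Artin–Tits group. -/
def ggen (M : CoxM I) (i : I) : AG M := PresentedGroup.of i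

/-- The relators defining the Coxeter group. -/
def coxRels (M : CoxM I) : Set (FreeGroup I) :=
  {r | ∃ i j, M.m i j ≠ 0 ∧ r = (FreeGroup.of i * FreeGroup.of j) ^ (M.m i j)}

/-- The Coxeter group `W` of a Coxeter matrix. -/
def CoxG (M : CoxM I) := PresentedGroup (coxRels M)

instance (M : CoxM I) : Group (CoxG M) := inferInstanceAs (Group (PresentedGroup _))

/-- A Coxeter matrix is spherical if its Coxeter group is finite. -/
def Spherical (M : CoxM I) : Prop := Finite (CoxG M)

/-- Connectedness of the Coxeter graph: there is an edge between `i` and `j`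
iff `m i j ∉ {1,2}`. -/
def Connected (M : CoxM I) : Prop :=
  ∀ i j : I, Relation.ReflTransGen (fun a b => M.m a b ≠ 1 ∧ M.m a b ≠ 2) i j

/-- Restriction of a Coxeter matrix to a subset of the index set. -/
def CoxM.restrictF [DecidableEq I] (M : CoxM I) (J : Finset I) : CoxM {i // i ∈ J} :=
  ⟨fun i j => M.m i j, fun i j => M.symm i j,
   fun i j => (M.one_iff i j).trans (by exact Subtype.coe_inj)⟩

/-- An irreducible affine Coxeter matrix: connected, non-spherical, but every proper
parabolic submatrix is spherical. -/
def Affine [Fintype I] [DecidableEq I] (M : CoxM I) : Prop :=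
  Connected M ∧ ¬ Spherical M ∧ ∀ J : Finset I, J ≠ Finset.univ → Spherical (M.restrictF J)

/-! ### The standard root system -/

section Roots

variable [Fintype I] [DecidableEq I]

/-- The coefficients `-2 cos (π / m i j)` of the standard bilinear form. -/
noncomputable def cf (M : CoxM I) (i j : I) : ℝ := -2 * Real.cos (Real.pi / (M.m i j : ℝ))

/-- The standard symmetric bilinear form `( · | · )` on `E = ⊕ ℝ α_i`. -/
noncomputable def bform (M : CoxM I) (x y : I → ℝ) : ℝ := ∑ i, ∑ j, x i * y j * cf M i j

/-- The simple root `α_i`. -/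
def sroot (i : I) : I → ℝ := Pi.single i 1

/-- The simple reflection `s_i` acting on `E`. -/
noncomputable def srefl (M : CoxM I) (i : I) (v : I → ℝ) : I → ℝ :=
  v - bform M v (sroot i) • sroot i

/-- The roots: the orbit of the simple roots under the reflections. -/
inductive IsRoot (M : CoxM I) : (I → ℝ) → Prop
  | simple (i : I) : IsRoot M (sroot i)
  | srefl (i : I) (v : I → ℝ) : IsRoot M v → IsRoot M (LK.srefl M i v)

/-- The positive roots: roots with nonnegative coordinates. -/
def IsPos (M : CoxM I) (v : I → ℝ) : Prop := IsRoot M v ∧ ∀ i, 0 ≤ v i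

/-- The set `Φ⁺` of positive roots, as a type. -/
def Pos (M : CoxM I) := {v : I → ℝ // IsPos M v}

/-- The depth of a positive root: the least number of simple reflections needed to
send it to a negative vector. -/
noncomputable def dep (M : CoxM I) (v : I → ℝ) : ℕ :=
  sInf {n | ∃ l : List I, l.length = n ∧ ∃ k, l.foldr (srefl M) v k < 0}

theorem isPos_sroot (M : CoxM I) (i : I) : IsPos M (sroot i) :=
  ⟨IsRoot.simple i, fun j => by rw [sroot, Pi.single_apply]; split <;> norm_num⟩

/-- The simple root `α_i` as a positive root. -/
def simplePos (M : CoxM I) (i : I) : Pos M := ⟨sroot i, isPos_sroot M i⟩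

/-! ### The Lawrence–Krammer representation -/

variable (M : CoxM I) (R : Type) [CommRing R]

/-- The free module `V` with basis `(e_α)` indexed by the positive roots. -/
abbrev VV := Pos M →₀ R

/-- The basis vector `e_α` of `V`. -/
noncomputable def ev (α : Pos M) : VV M R := Finsupp.single α 1

open scoped Classical in
/-- The value of the map `φ_i` on the basis vector indexed by `α`. -/
noncomputable def phiAux (a b c d : R) (i : I) (α : Pos M) : VV M R :=
  if α.1 = sroot i then 0
  else if srefl M i α.1 = α.1 then d • ev M R α
  else if h : IsPos M (srefl M i α.1) then
    if dep M α.1 < dep M (srefl M i α.1) then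
      a • ev M R α + c • ev M R ⟨srefl M i α.1, h⟩
    else b • ev M R ⟨srefl M i α.1, h⟩
  else 0

/-- The linear map `φ_i : V → V`. -/
noncomputable def phi (a b c d : R) (i : I) : VV M R →ₗ[R] VV M R :=
  Finsupp.lift (VV M R) R (Pos M) (phiAux M R a b c d i)

/-- The linear map `ψ_i = φ_i + f_i ⊠ e_{α_i}`. -/
noncomputable def psim (a b c d : R) (f : I → (VV M R →ₗ[R] R)) (i : I) :
    VV M R →ₗ[R] VV M R :=
  phi M R a b c d i + (f i).smulRight (ev M R (simplePos M i))

/-- LK-families. -/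
structure IsLK (a b c d : R) (f : I → (VV M R →ₗ[R] R)) : Prop where
  diag : ∀ i j, i ≠ j → f i (ev M R (simplePos M j)) = 0
  rel2 : ∀ i j, M.m i j = 2 → (f i).comp (phi M R a b c d j) = d • f i
  rel3 : ∀ i j, M.m i j = 3 →
    (f i).comp (phi M R a b c d j) = (f j).comp (phi M R a b c d i)

/-- The `R`-module `𝓕` of LK-families. -/
noncomputable def LKFamilies (a b c d : R) : Submodule R (I → (VV M R →ₗ[R] R)) where
  carrier := {f | IsLK M R a b c d f}
  add_mem' := by
    rintro f g ⟨hf1, hf2, hf3⟩ ⟨hg1, hg2, hg3⟩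
    refine ⟨fun i j hij => ?_, fun i j hij => ?_, fun i j hij => ?_⟩
    · rw [Pi.add_apply, LinearMap.add_apply, hf1 i j hij, hg1 i j hij, add_zero]
    · simp only [Pi.add_apply, LinearMap.add_comp, hf2 i j hij, hg2 i j hij, smul_add]
    · simp only [Pi.add_apply, LinearMap.add_comp, hf3 i j hij, hg3 i j hij]
  zero_mem' := by
    refine ⟨fun i j hij => ?_, fun i j hij => ?_, fun i j hij => ?_⟩
    · rw [Pi.zero_apply, LinearMap.zero_apply]
    · simp only [Pi.zero_apply, LinearMap.zero_comp, smul_zero]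
    · simp only [Pi.zero_apply, LinearMap.zero_comp]
  smul_mem' := by
    rintro r f ⟨h1, h2, h3⟩
    refine ⟨fun i j hij => ?_, fun i j hij => ?_, fun i j hij => ?_⟩
    · rw [Pi.smul_apply, LinearMap.smul_apply, h1 i j hij, smul_zero]
    · rw [Pi.smul_apply, LinearMap.smul_comp, h2 i j hij]; exact smul_comm r d (f i)
    · simp only [Pi.smul_apply, LinearMap.smul_comp, h3 i j hij]

end Roots

/-! ### The monoid of binary relations -/

/-- The monoid of binary relations on a set `Ω`, where `β (R * S) α ↔ ∃ γ, β R γ ∧ γ S α`. -/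
def Bin (Ω : Type) := Ω → Ω → Prop

instance (Ω : Type) : Monoid (Bin Ω) where
  mul T S := fun x z => ∃ y, T x y ∧ S y z
  one := fun x y => x = y
  mul_assoc T S U := by
    funext x z
    apply propext
    constructor
    · rintro ⟨y, ⟨u, hTu, hSu⟩, hU⟩; exact ⟨u, hTu, y, hSu, hU⟩
    · rintro ⟨u, hT, y, hS, hU⟩; exact ⟨y, ⟨u, hT, hS⟩, hU⟩
  one_mul T := by
    funext x z
    apply propext
    constructor
    · rintro ⟨y, rfl, h⟩; exact h
    · intro h; exact ⟨x, rfl, h⟩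
  mul_one T := by
    funext x z
    apply propext
    constructor
    · rintro ⟨y, h, rfl⟩; exact h
    · intro h; exact ⟨z, h, rfl⟩

/-- `R(Ψ) = {β ∈ Ω ∣ ∃ α ∈ Ψ, β R α}`. -/
def Bin.image {Ω : Type} (T : Bin Ω) (Ψ : Set Ω) : Set Ω := {x | ∃ y ∈ Ψ, T x y}

/-! ### Further constructions -/

section More

variable [Fintype I] [DecidableEq I]

/-- The map `μ : 𝓕 → 𝔯` in the spherical case. -/
noncomputable def muSph (M : CoxM I) (R : Type) [CommRing R] (a b c d : R) (i0 : I) :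
    LKFamilies M R a b c d →ₗ[R] R where
  toFun f := f.1 i0 (ev M R (simplePos M i0))
  map_add' f g := rfl
  map_smul' r f := rfl

/-- A graph automorphism of a Coxeter matrix. -/
def IsAut (M : CoxM I) (g : Equiv.Perm I) : Prop := ∀ i j, M.m (g i) (g j) = M.m i j

/-- The action of a permutation of `I` on `E = ⊕ ℝ α_i`, sending `α_i` to `α_{g(i)}`. -/
def permE (g : Equiv.Perm I) (v : I → ℝ) : I → ℝ := fun i => v (g.symm i)

open scoped Classical in
/-- The element of `Φ⁺` with given coordinates (junk value if the vector is not
a positive root). -/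
noncomputable def posOf (M : CoxM I) [Nonempty I] (v : I → ℝ) : Pos M :=
  if h : IsPos M v then ⟨v, h⟩ else simplePos M (Classical.arbitrary I)

/-- The action of a permutation of `I` on `Φ⁺`. -/
noncomputable def permPos (M : CoxM I) [Nonempty I] (g : Equiv.Perm I) (α : Pos M) : Pos M :=
  posOf M (permE g α.1)

/-- The action of a permutation of `I` on `V`, permuting the basis `(e_α)`. -/
noncomputable def permV (M : CoxM I) (R : Type) [CommRing R] [Nonempty I] (g : Equiv.Perm I) :
    VV M R →ₗ[R] VV M R :=
  Finsupp.lmapDomain R R (permPos M g)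

/-- The submodule `V^G` of fixed points of `V` under a group `G` of permutations of `I`. -/
noncomputable def fixedV (M : CoxM I) (R : Type) [CommRing R] [Nonempty I]
    (G : Subgroup (Equiv.Perm I)) : Submodule R (VV M R) where
  carrier := {v | ∀ g ∈ G, permV M R g v = v}
  add_mem' hx hy g hg := by rw [map_add, hx g hg, hy g hg]
  zero_mem' g hg := map_zero _
  smul_mem' r v hv g hg := by rw [map_smul, hv g hg]

/-- The submonoid `(B⁺)^G` of fixed points of the Artin–Tits monoid under a group `G`
of permutations of `I` (acting via `actB`). -/
def fixedB (M : CoxM I) (actB : Equiv.Perm I → (AM M →* AM M))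
    (G : Subgroup (Equiv.Perm I)) : Submonoid (AM M) where
  carrier := {x | ∀ g ∈ G, actB g x = x}
  one_mem' g hg := map_one _
  mul_mem' hx hy g hg := by rw [map_mul, hx g hg, hy g hg]

/-- The map `μ : 𝓕 → 𝔯^ℕ` in the affine case, defined from the data of the imaginary
root `δ` and of a pair `(i0, j0)` with `m i0 j0 = 3`. -/
noncomputable def muAff (M : CoxM I) (R : Type) [CommRing R] [Nonempty I] (b c d : R)
    (δ : I → ℝ) (i0 j0 : I) (f : I → (VV M R →ₗ[R] R)) : ℕ → R := fun n =>
  if n % 2 = 0 then f i0 (ev M R (posOf M ((n / 2 : ℕ) • δ + sroot i0)))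
  else
    c * d * f i0 (ev M R (posOf M (((n + 1) / 2 : ℕ) • δ - sroot i0)))
      - b * c * f i0 (ev M R (posOf M (((n + 1) / 2 : ℕ) • δ - sroot i0 - sroot j0)))
      - d * d * f j0 (ev M R (posOf M (((n + 1) / 2 : ℕ) • δ - sroot i0 - sroot j0)))

end More

section AuxLK


variable {I : Type}

section Roots

variable [Fintype I] [DecidableEq I]

variable (M : CoxM I)

theorem cf_symm (i j : I) : cf M i j = cf M j i := by rw [cf, cf, M.symm]

theorem cf_self (i : I) : cf M i i = 2 := by
  have h1 : M.m i i = 1 := (M.one_iff i i).2 rfl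
  rw [cf, h1]; norm_num

theorem cf_of_two {i j : I} (h : M.m i j = 2) : cf M i j = 0 := by
  rw [cf, h]; norm_num [Real.cos_pi_div_two]

theorem cf_of_three {i j : I} (h : M.m i j = 3) : cf M i j = -1 := by
  rw [cf, h]; norm_num [Real.cos_pi_div_three]

theorem bform_add_left (x y z : I → ℝ) : bform M (x + y) z = bform M x z + bform M y z := by
  simp [bform, add_mul, Finset.sum_add_distrib]

theorem bform_smul_left (r : ℝ) (x z : I → ℝ) : bform M (r • x) z = r * bform M x z := by
  simp [bform, Finset.mul_sum, mul_assoc]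

theorem bform_sub_left (x y z : I → ℝ) : bform M (x - y) z = bform M x z - bform M y z := by
  simp [bform, sub_mul, Finset.sum_sub_distrib]

theorem bform_comm (x y : I → ℝ) : bform M x y = bform M y x := by
  rw [bform, bform, Finset.sum_comm]
  apply Finset.sum_congr rfl; intro i _; apply Finset.sum_congr rfl; intro j _
  rw [cf_symm]; ring

theorem bform_add_right (x y z : I → ℝ) : bform M x (y + z) = bform M x y + bform M x z := by
  rw [bform_comm, bform_add_left, bform_comm M y, bform_comm M z]

theorem bform_sub_right (x y z : I → ℝ) : bform M x (y - z) = bform M x y - bform M x z := by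
  rw [bform_comm, bform_sub_left, bform_comm M y, bform_comm M z]

theorem bform_smul_right (r : ℝ) (x z : I → ℝ) : bform M x (r • z) = r * bform M x z := by
  rw [bform_comm, bform_smul_left, bform_comm]

theorem bform_sroot (v : I → ℝ) (j : I) : bform M v (sroot j) = ∑ k, v k * cf M k j := by
  rw [bform]
  apply Finset.sum_congr rfl; intro k _
  rw [Finset.sum_eq_single j]
  · simp [sroot]
  · intro l _ hl; simp [sroot, Pi.single_apply, hl]
  · intro h; exact absurd (Finset.mem_univ j) h

theorem bform_sroot_sroot (i j : I) : bform M (sroot i) (sroot j) = cf M i j := by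
  rw [bform_sroot, Finset.sum_eq_single i]
  · simp [sroot]
  · intro l _ hl; simp [sroot, Pi.single_apply, hl]
  · intro h; exact absurd (Finset.mem_univ i) h

theorem srefl_def (i : I) (v : I → ℝ) : srefl M i v = v - bform M v (sroot i) • sroot i := rfl

theorem bform_srefl_left (i : I) (v w : I → ℝ) :
    bform M (srefl M i v) w = bform M v w - bform M v (sroot i) * bform M (sroot i) w := by
  rw [srefl_def, bform_sub_left, bform_smul_left]

theorem bform_srefl_right (i : I) (v w : I → ℝ) :
    bform M v (srefl M i w) = bform M v w - bform M w (sroot i) * bform M v (sroot i) := by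
  rw [bform_comm, bform_srefl_left, bform_comm M w v, bform_comm M _ v]

theorem srefl_srefl (i : I) (v : I → ℝ) : srefl M i (srefl M i v) = v := by
  rw [srefl_def M i (srefl M i v), bform_srefl_left, bform_sroot_sroot, cf_self]
  rw [srefl_def]
  module

theorem bform_invariant (i : I) (v w : I → ℝ) :
    bform M (srefl M i v) (srefl M i w) = bform M v w := by
  rw [bform_srefl_left, bform_srefl_right, bform_srefl_right, bform_sroot_sroot, cf_self,
    bform_comm M (sroot i) w]
  ring

theorem srefl_add (i : I) (v w : I → ℝ) :
    srefl M i (v + w) = srefl M i v + srefl M i w := by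
  simp only [srefl_def, bform_add_left, add_smul]; abel

theorem srefl_smul (i : I) (r : ℝ) (v : I → ℝ) :
    srefl M i (r • v) = r • srefl M i v := by
  simp only [srefl_def, bform_smul_left, smul_sub, smul_smul]

theorem srefl_sroot_self (i : I) : srefl M i (sroot i) = -sroot i := by
  rw [srefl_def, bform_sroot_sroot, cf_self]; module

/-- srefl acts only on coordinate i -/
theorem srefl_apply_ne (i : I) (v : I → ℝ) {k : I} (h : k ≠ i) :
    srefl M i v k = v k := by
  simp [srefl_def, sroot, Pi.single_apply, h]

theorem srefl_apply_self (i : I) (v : I → ℝ) :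
    srefl M i v i = v i - bform M v (sroot i) := by
  simp [srefl_def, sroot]

/-- The commutation relation for m = 2. -/
theorem srefl_comm {i j : I} (hc : cf M i j = 0) (v : I → ℝ) :
    srefl M i (srefl M j v) = srefl M j (srefl M i v) := by
  have hc' : cf M j i = 0 := by rw [cf_symm]; exact hc
  rw [srefl_def M i (srefl M j v), srefl_def M j (srefl M i v),
    bform_srefl_left, bform_srefl_left, bform_sroot_sroot, bform_sroot_sroot, hc, hc',
    srefl_def, srefl_def]
  module

/-- The braid relation for m = 3 on E. -/
theorem srefl_braid {i j : I} (hc : cf M i j = -1) (v : I → ℝ) :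
    srefl M i (srefl M j (srefl M i v)) = srefl M j (srefl M i (srefl M j v)) := by
  have hc' : cf M j i = -1 := by rw [cf_symm]; exact hc
  have key : ∀ k l : I, cf M k l = -1 → cf M l k = -1 →
      srefl M k (srefl M l (srefl M k v)) =
        v - (bform M v (sroot k) + bform M v (sroot l)) • (sroot k + sroot l) := by
    intro k l h1 h2
    have e1 : srefl M k v = v - bform M v (sroot k) • sroot k := rfl
    have b1 : bform M (srefl M k v) (sroot l) =
        bform M v (sroot l) + bform M v (sroot k) := by
      rw [bform_srefl_left, bform_sroot_sroot, h1]; ring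
    have e2 : srefl M l (srefl M k v) = srefl M k v -
        (bform M v (sroot l) + bform M v (sroot k)) • sroot l := by
      rw [srefl_def M l, b1]
    have b2 : bform M (srefl M l (srefl M k v)) (sroot k) =
        bform M v (sroot l) := by
      rw [e2, bform_sub_left, bform_smul_left, bform_srefl_left, bform_sroot_sroot,
        bform_sroot_sroot, h2, cf_self]
      ring
    rw [srefl_def M k (srefl M l (srefl M k v)), b2, e2, e1]
    module
  rw [key i j hc hc', key j i hc' hc]
  module

end Roots


section Group
variable {I : Type}

variable (M : CoxM I)

/-- generator -/
def cgen (i : I) : CoxG M := PresentedGroup.of i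

theorem cgen_pow_rel {i j : I} (h : M.m i j ≠ 0) :
    (cgen M i * cgen M j) ^ (M.m i j) = 1 := by
  have hr : ((FreeGroup.of i * FreeGroup.of j) ^ (M.m i j)) ∈ coxRels M := ⟨i, j, h, rfl⟩
  have h1 : ((QuotientGroup.mk ((FreeGroup.of i * FreeGroup.of j) ^ (M.m i j)) :
      PresentedGroup (coxRels M))) = 1 :=
    (QuotientGroup.eq_one_iff _).2 (Subgroup.subset_normalClosure hr)
  have h2 : (QuotientGroup.mk ((FreeGroup.of i * FreeGroup.of j) ^ (M.m i j)) :
      PresentedGroup (coxRels M)) =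
      ((QuotientGroup.mk (FreeGroup.of i * FreeGroup.of j) :
        PresentedGroup (coxRels M))) ^ (M.m i j) :=
    map_pow (QuotientGroup.mk' (Subgroup.normalClosure (coxRels M))) _ _
  rw [h2] at h1
  have h3 : (QuotientGroup.mk (FreeGroup.of i * FreeGroup.of j) :
      PresentedGroup (coxRels M)) = cgen M i * cgen M j :=
    map_mul (QuotientGroup.mk' (Subgroup.normalClosure (coxRels M))) _ _
  rw [h3] at h1; exact h1

theorem cgen_sq (i : I) : cgen M i * cgen M i = 1 := by
  have h1 : M.m i i = 1 := (M.one_iff i i).2 rfl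
  have := cgen_pow_rel M (i := i) (j := i) (by rw [h1]; exact one_ne_zero)
  rwa [h1, pow_one] at this

theorem cgen_inv (i : I) : (cgen M i)⁻¹ = cgen M i :=
  inv_eq_of_mul_eq_one_right (cgen_sq M i)

theorem cgen_comm {i j : I} (h : M.m i j = 2) : cgen M i * cgen M j = cgen M j * cgen M i := by
  have h1 := cgen_pow_rel M (i := i) (j := j) (by rw [h]; norm_num)
  rw [h, pow_two] at h1
  have : cgen M i * cgen M j = (cgen M i * cgen M j)⁻¹ := by
    rw [eq_inv_iff_mul_eq_one]; exact h1
  rw [this, mul_inv_rev, cgen_inv, cgen_inv]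

theorem cgen_braid {i j : I} (h : M.m i j = 3) :
    cgen M i * cgen M j * cgen M i = cgen M j * cgen M i * cgen M j := by
  have h1 := cgen_pow_rel M (i := i) (j := j) (by rw [h]; norm_num)
  rw [h] at h1
  have h2 : (cgen M i * cgen M j * cgen M i) * (cgen M j * cgen M i * cgen M j) = 1 := by
    have : (cgen M i * cgen M j) ^ 3 =
        (cgen M i * cgen M j * cgen M i) * (cgen M j * cgen M i * cgen M j) := by
      rw [pow_succ, pow_succ, pow_one]; group
    rw [← this]; exact h1
  have h3 : cgen M i * cgen M j * cgen M i = (cgen M j * cgen M i * cgen M j)⁻¹ := by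
    rw [eq_inv_iff_mul_eq_one]; exact h2
  rw [h3, mul_inv_rev, mul_inv_rev, cgen_inv, cgen_inv]
  rw [mul_assoc]

/-- word product -/
def wp (l : List I) : CoxG M := (l.map (cgen M)).prod

@[simp] theorem wp_nil : wp M ([] : List I) = 1 := rfl

@[simp] theorem wp_cons (x : I) (l : List I) : wp M (x :: l) = cgen M x * wp M l := by
  simp [wp]

theorem wp_append (l₁ l₂ : List I) : wp M (l₁ ++ l₂) = wp M l₁ * wp M l₂ := by
  simp [wp]

theorem wp_singleton (x : I) : wp M [x] = cgen M x := by simp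

theorem exists_word (w : CoxG M) : ∃ l : List I, wp M l = w := by
  obtain ⟨z, rfl⟩ := QuotientGroup.mk_surjective w
  induction z using FreeGroup.induction_on with
  | C1 => exact ⟨[], rfl⟩
  | of x => exact ⟨[x], by rw [wp_singleton]; rfl⟩
  | inv_of x _ =>
      refine ⟨[x], ?_⟩
      rw [wp_singleton, QuotientGroup.mk_inv]
      exact (cgen_inv M x).symm
  | mul x y hx hy =>
      obtain ⟨lx, hlx⟩ := hx
      obtain ⟨ly, hly⟩ := hy
      refine ⟨lx ++ ly, ?_⟩
      rw [wp_append, hlx, hly, QuotientGroup.mk_mul]; rfl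

/-- length -/
noncomputable def cl (w : CoxG M) : ℕ := sInf {n | ∃ l : List I, wp M l = w ∧ l.length = n}

theorem cl_set_nonempty (w : CoxG M) :
    {n | ∃ l : List I, wp M l = w ∧ l.length = n}.Nonempty := by
  obtain ⟨l, hl⟩ := exists_word M w
  exact ⟨l.length, l, hl, rfl⟩

theorem cl_spec (w : CoxG M) : ∃ l : List I, wp M l = w ∧ l.length = cl M w :=
  Nat.sInf_mem (cl_set_nonempty M w)

theorem cl_le {w : CoxG M} {l : List I} (h : wp M l = w) : cl M w ≤ l.length :=
  Nat.sInf_le ⟨l, h, rfl⟩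

@[simp] theorem cl_one : cl M (1 : CoxG M) = 0 :=
  Nat.le_zero.1 (cl_le M (wp_nil M))

theorem eq_one_of_cl_eq_zero {w : CoxG M} (h : cl M w = 0) : w = 1 := by
  obtain ⟨l, hl, hlen⟩ := cl_spec M w
  rw [h] at hlen
  rw [List.length_eq_zero_iff] at hlen
  rw [hlen] at hl
  rw [← hl, wp_nil]

theorem cl_mul_le (u v : CoxG M) : cl M (u * v) ≤ cl M u + cl M v := by
  obtain ⟨lu, hu, hul⟩ := cl_spec M u
  obtain ⟨lv, hv, hvl⟩ := cl_spec M v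
  have : wp M (lu ++ lv) = u * v := by rw [wp_append, hu, hv]
  calc cl M (u * v) ≤ (lu ++ lv).length := cl_le M this
    _ = cl M u + cl M v := by rw [List.length_append, hul, hvl]

theorem cl_mul_cgen_le (w : CoxG M) (s : I) : cl M (w * cgen M s) ≤ cl M w + 1 := by
  have := cl_mul_le M w (cgen M s)
  have h1 : cl M (cgen M s) ≤ 1 := cl_le M (wp_singleton M s)
  omega

theorem cl_le_cl_mul_cgen (w : CoxG M) (s : I) : cl M w ≤ cl M (w * cgen M s) + 1 := by
  have := cl_mul_cgen_le M (w * cgen M s) s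
  rwa [mul_assoc, cgen_sq, mul_one] at this

/-- parity homomorphism -/
def par : CoxG M →* Multiplicative (ZMod 2) :=
  PresentedGroup.toGroup (f := fun _ => Multiplicative.ofAdd (1 : ZMod 2)) (by
    rintro r ⟨i, j, h, rfl⟩
    rw [map_pow, map_mul, FreeGroup.lift_apply_of, FreeGroup.lift_apply_of]
    have : (Multiplicative.ofAdd (1 : ZMod 2)) * (Multiplicative.ofAdd (1 : ZMod 2)) = 1 := by
      decide
    rw [this, one_pow])

@[simp] theorem par_cgen (i : I) : par M (cgen M i) = Multiplicative.ofAdd (1 : ZMod 2) :=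
  PresentedGroup.toGroup.of _

theorem par_wp (l : List I) : par M (wp M l) = Multiplicative.ofAdd (l.length : ZMod 2) := by
  induction l with
  | nil => simp
  | cons x l ih =>
      rw [wp_cons, map_mul, par_cgen, ih]
      simp [← ofAdd_add]
      ring_nf

theorem par_eq (w : CoxG M) : par M w = Multiplicative.ofAdd (cl M w : ZMod 2) := by
  obtain ⟨l, hl, hlen⟩ := cl_spec M w
  rw [← hlen, ← hl, par_wp]

theorem cl_mul_cgen_ne (w : CoxG M) (s : I) : cl M (w * cgen M s) ≠ cl M w := by
  intro h
  have h1 := par_eq M (w * cgen M s)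
  rw [map_mul, par_cgen, par_eq M w, h] at h1
  have : (Multiplicative.ofAdd ((cl M w : ZMod 2))) * Multiplicative.ofAdd (1 : ZMod 2)
      = Multiplicative.ofAdd ((cl M w : ZMod 2) + 1) := by rw [← ofAdd_add]
  rw [this] at h1
  have h2 : ((cl M w : ZMod 2)) + 1 = (cl M w : ZMod 2) :=
    Multiplicative.ofAdd.injective h1
  have h3 : (1 : ZMod 2) = 0 := by linear_combination h2
  exact one_ne_zero h3

theorem cl_mul_cgen (w : CoxG M) (s : I) :
    cl M (w * cgen M s) = cl M w + 1 ∨ cl M (w * cgen M s) + 1 = cl M w := by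
  have h1 := cl_mul_cgen_le M w s
  have h2 := cl_le_cl_mul_cgen M w s
  have h3 := cl_mul_cgen_ne M w s
  omega


end Group

section Action

variable [Fintype I] [DecidableEq I] (M : CoxM I)

theorem sroot_nonneg (s k : I) : 0 ≤ sroot s k := by
  rw [sroot, Pi.single_apply]; split <;> norm_num

noncomputable def sreflL (i : I) : (I → ℝ) →ₗ[ℝ] (I → ℝ) where
  toFun := srefl M i
  map_add' := srefl_add M i
  map_smul' := srefl_smul M i

noncomputable def sreflE (i : I) : (I → ℝ) ≃ₗ[ℝ] (I → ℝ) :=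
  LinearEquiv.ofInvolutive (sreflL M i) (srefl_srefl M i)

@[simp] theorem sreflE_apply (i : I) (v : I → ℝ) : sreflE M i v = srefl M i v := rfl

theorem linequiv_mul_apply (f g : (I → ℝ) ≃ₗ[ℝ] (I → ℝ)) (v : I → ℝ) :
    (f * g) v = f (g v) := rfl

noncomputable def rho (hs : M.Small) : CoxG M →* ((I → ℝ) ≃ₗ[ℝ] (I → ℝ)) :=
  PresentedGroup.toGroup (f := fun i => sreflE M i) (by
    rintro r ⟨i, j, hne, rfl⟩
    rw [map_pow, map_mul, FreeGroup.lift_apply_of, FreeGroup.lift_apply_of]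
    rcases hs i j with h | h | h
    · have hij : i = j := (M.one_iff i j).1 h
      subst hij
      rw [h, pow_one]
      apply LinearEquiv.ext; intro v
      show srefl M i (srefl M i v) = v
      exact srefl_srefl M i v
    · have hc : cf M i j = 0 := cf_of_two M h
      rw [h]
      apply LinearEquiv.ext; intro v
      show srefl M i (srefl M j (srefl M i (srefl M j v))) = v
      rw [← srefl_comm M hc (srefl M j v), srefl_srefl M i, srefl_srefl M j]
    · have hc : cf M i j = -1 := cf_of_three M h
      rw [h]
      apply LinearEquiv.ext; intro v
      show srefl M i (srefl M j (srefl M i (srefl M j (srefl M i (srefl M j v))))) = v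
      rw [← srefl_braid M hc v, srefl_srefl M i (srefl M j (srefl M i v)),
        srefl_srefl M j, srefl_srefl M i])

@[simp] theorem rho_cgen (hs : M.Small) (i : I) : rho M hs (cgen M i) = sreflE M i :=
  PresentedGroup.toGroup.of _

theorem rho_wp (hs : M.Small) (l : List I) (v : I → ℝ) :
    rho M hs (wp M l) v = l.foldr (srefl M) v := by
  induction l with
  | nil => simp
  | cons x l ih =>
      rw [wp_cons, map_mul, linequiv_mul_apply, ih, rho_cgen, List.foldr_cons, sreflE_apply]

theorem descent : ∀ n (w : CoxG M) (s t : I), cl M w = n →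
    ∃ (u : CoxG M) (lst : List I), (∀ x ∈ lst, x = s ∨ x = t) ∧ w = u * wp M lst ∧
      cl M u + lst.length = n ∧ cl M (u * cgen M s) = cl M u + 1 ∧
      cl M (u * cgen M t) = cl M u + 1 := by
  intro n
  induction n using Nat.strong_induction_on with
  | _ n IH =>
  intro w s t hw
  rcases cl_mul_cgen M w s with hs1 | hs1
  · rcases cl_mul_cgen M w t with ht1 | ht1
    · exact ⟨w, [], by simp, by simp, by simp [hw], by rw [hs1, hw], by rw [ht1, hw]⟩
    · have hlt : cl M (w * cgen M t) < n := by omega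
      obtain ⟨u, lst, hmem, hwu, hlen, hus, hut⟩ := IH _ hlt (w * cgen M t) s t rfl
      refine ⟨u, lst ++ [t], ?_, ?_, ?_, hus, hut⟩
      · intro x hx
        rcases List.mem_append.1 hx with h | h
        · exact hmem x h
        · right; simpa using h
      · have : w = (w * cgen M t) * cgen M t := by
          rw [mul_assoc, cgen_sq, mul_one]
        rw [this, hwu, wp_append, wp_singleton, mul_assoc]
      · simp only [List.length_append, List.length_cons, List.length_nil]
        omega
  · have hlt : cl M (w * cgen M s) < n := by omega
    obtain ⟨u, lst, hmem, hwu, hlen, hus, hut⟩ := IH _ hlt (w * cgen M s) s t rfl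
    refine ⟨u, lst ++ [s], ?_, ?_, ?_, hus, hut⟩
    · intro x hx
      rcases List.mem_append.1 hx with h | h
      · exact hmem x h
      · left; simpa using h
    · have : w = (w * cgen M s) * cgen M s := by
        rw [mul_assoc, cgen_sq, mul_one]
      rw [this, hwu, wp_append, wp_singleton, mul_assoc]
    · simp only [List.length_append, List.length_cons, List.length_nil]
      omega

theorem canon2 {s t : I} (h2 : M.m s t = 2) :
    ∀ l : List I, (∀ x ∈ l, x = s ∨ x = t) →
    ∃ c : List I, wp M c = wp M l ∧ c.length ≤ l.length ∧
      (c = [] ∨ c = [s] ∨ c = [t] ∨ c = [s,t] ∨ c = [t,s]) := by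
  have hts : M.m t s = 2 := by rw [M.symm]; exact h2
  have hco := cgen_comm M h2
  intro l
  induction l with
  | nil => exact fun _ => ⟨[], rfl, le_refl _, Or.inl rfl⟩
  | cons x l ih =>
    intro hx
    obtain ⟨c, hc, hlen, hmem⟩ := ih (fun y hy => hx y (List.mem_cons_of_mem x hy))
    have hxm := hx x (List.mem_cons_self)
    have key : ∀ c' : List I, wp M c' = cgen M x * wp M c → c'.length ≤ c.length + 1 →
        (c' = [] ∨ c' = [s] ∨ c' = [t] ∨ c' = [s,t] ∨ c' = [t,s]) →
        ∃ c'' : List I, wp M c'' = wp M (x :: l) ∧ c''.length ≤ (x :: l).length ∧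
          (c'' = [] ∨ c'' = [s] ∨ c'' = [t] ∨ c'' = [s,t] ∨ c'' = [t,s]) := by
      intro c' h1 h2' h3
      refine ⟨c', ?_, ?_, h3⟩
      · rw [h1, wp_cons, hc]
      · simp only [List.length_cons]; omega
    rcases hxm with rfl | rfl
    · rcases hmem with rfl | rfl | rfl | rfl | rfl
      · exact key [x] (by simp) (by simp) (by tauto)
      · exact key [] (by simp [cgen_sq]) (by simp) (by tauto)
      · exact key [x, t] (by simp) (by simp) (by tauto)
      · exact key [t] (by
          simp only [wp_cons, wp_nil, mul_one, ← mul_assoc]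
          rw [cgen_sq, one_mul]) (by simp) (by tauto)
      · exact key [t] (by
          simp only [wp_cons, wp_nil, mul_one, ← mul_assoc]
          rw [hco, mul_assoc, cgen_sq, mul_one]) (by simp) (by tauto)
    · rcases hmem with rfl | rfl | rfl | rfl | rfl
      · exact key [x] (by simp) (by simp) (by tauto)
      · exact key [x, s] (by simp) (by simp) (by tauto)
      · exact key [] (by simp [cgen_sq]) (by simp) (by tauto)
      · exact key [s] (by
          simp only [wp_cons, wp_nil, mul_one, ← mul_assoc]
          rw [← hco, mul_assoc, cgen_sq, mul_one]) (by simp) (by tauto)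
      · exact key [s] (by
          simp only [wp_cons, wp_nil, mul_one, ← mul_assoc]
          rw [cgen_sq, one_mul]) (by simp) (by tauto)

theorem canon3 {s t : I} (h3 : M.m s t = 3) :
    ∀ l : List I, (∀ x ∈ l, x = s ∨ x = t) →
    ∃ c : List I, wp M c = wp M l ∧ c.length ≤ l.length ∧
      (c = [] ∨ c = [s] ∨ c = [t] ∨ c = [s,t] ∨ c = [t,s] ∨ c = [s,t,s]) := by
  have hb := cgen_braid M h3
  intro l
  induction l with
  | nil => exact fun _ => ⟨[], rfl, le_refl _, Or.inl rfl⟩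
  | cons x l ih =>
    intro hx
    obtain ⟨c, hc, hlen, hmem⟩ := ih (fun y hy => hx y (List.mem_cons_of_mem x hy))
    have hxm := hx x (List.mem_cons_self)
    have key : ∀ c' : List I, wp M c' = cgen M x * wp M c → c'.length ≤ c.length + 1 →
        (c' = [] ∨ c' = [s] ∨ c' = [t] ∨ c' = [s,t] ∨ c' = [t,s] ∨ c' = [s,t,s]) →
        ∃ c'' : List I, wp M c'' = wp M (x :: l) ∧ c''.length ≤ (x :: l).length ∧
          (c'' = [] ∨ c'' = [s] ∨ c'' = [t] ∨ c'' = [s,t] ∨ c'' = [t,s] ∨ c'' = [s,t,s]) := by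
      intro c' h1 h2' h3'
      refine ⟨c', ?_, ?_, h3'⟩
      · rw [h1, wp_cons, hc]
      · simp only [List.length_cons]; omega
    rcases hxm with rfl | rfl
    · rcases hmem with rfl | rfl | rfl | rfl | rfl | rfl
      · exact key [x] (by simp) (by simp) (by tauto)
      · exact key [] (by simp [cgen_sq]) (by simp) (by tauto)
      · exact key [x, t] (by simp) (by simp) (by tauto)
      · exact key [t] (by
          simp only [wp_cons, wp_nil, mul_one, ← mul_assoc]
          rw [cgen_sq, one_mul]) (by simp) (by tauto)
      · exact key [x, t, x] (by simp) (by simp) (by tauto)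
      · exact key [t, x] (by
          simp only [wp_cons, wp_nil, mul_one, ← mul_assoc]
          rw [cgen_sq, one_mul]) (by simp) (by tauto)
    · rcases hmem with rfl | rfl | rfl | rfl | rfl | rfl
      · exact key [x] (by simp) (by simp) (by tauto)
      · exact key [x, s] (by simp) (by simp) (by tauto)
      · exact key [] (by simp [cgen_sq]) (by simp) (by tauto)
      · exact key [s, x, s] (by
          simp only [wp_cons, wp_nil, mul_one, ← mul_assoc]
          rw [hb]) (by simp) (by tauto)
      · exact key [s] (by
          simp only [wp_cons, wp_nil, mul_one, ← mul_assoc]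
          rw [cgen_sq, one_mul]) (by simp) (by tauto)
      · exact key [s, x] (by
          simp only [wp_cons, wp_nil, mul_one, ← mul_assoc]
          rw [← hb, mul_assoc, cgen_sq, mul_one]) (by simp) (by tauto)

theorem srefl_sroot_of_two {s t : I} (h : M.m s t = 2) :
    srefl M t (sroot s) = sroot s := by
  rw [srefl_def, bform_sroot_sroot, cf_symm, cf_of_two M (by rw [M.symm]; exact h)]
  module

theorem srefl_sroot_of_three {s t : I} (h : M.m s t = 3) :
    srefl M t (sroot s) = sroot s + sroot t := by
  rw [srefl_def, bform_sroot_sroot, cf_of_three M h]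
  module

theorem srefl_gamma_of_three {s t : I} (h : M.m s t = 3) :
    srefl M s (sroot s + sroot t) = sroot t := by
  have h1 : cf M t s = -1 := cf_of_three M (by rw [M.symm]; exact h)
  rw [srefl_def, bform_add_left, bform_sroot_sroot, bform_sroot_sroot, cf_self, h1]
  module

theorem nonneg_of_cl_incr (hs : M.Small) :
    ∀ n (w : CoxG M), cl M w = n → ∀ s : I, cl M (w * cgen M s) = n + 1 →
      ∀ k, 0 ≤ (rho M hs w) (sroot s) k := by
  intro n
  induction n using Nat.strong_induction_on with
  | _ n IH =>
  intro w hw s hws k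
  rcases Nat.eq_zero_or_pos n with hn | hn
  · subst hn
    have hw1 : w = 1 := eq_one_of_cl_eq_zero M hw
    rw [hw1, map_one]
    exact sroot_nonneg s k
  · obtain ⟨l, hl, hlen⟩ := cl_spec M w
    rw [hw] at hlen
    rcases List.eq_nil_or_concat l with rfl | ⟨l₁, t, rfl⟩
    · simp at hlen; omega
    · rw [List.concat_eq_append] at hl hlen
      have hwt' : w * cgen M t = wp M l₁ := by
        rw [← hl, wp_append, wp_singleton, mul_assoc, cgen_sq, mul_one]
      have hl₁len : l₁.length = n - 1 := by
        simp only [List.length_append, List.length_cons, List.length_nil] at hlen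
        omega
      have hwt : cl M (w * cgen M t) = n - 1 := by
        have h1 : cl M (w * cgen M t) ≤ n - 1 := by
          rw [hwt']
          calc cl M (wp M l₁) ≤ l₁.length := cl_le M rfl
            _ = n - 1 := hl₁len
        rcases cl_mul_cgen M w t with h2 | h2 <;> omega
      have hst : s ≠ t := by
        intro h; rw [h] at hws; omega
      obtain ⟨u, lst, hmem, hwu, hlen2, hus, hut⟩ := descent M n w s t hw
      have hr : 1 ≤ lst.length := by
        rcases Nat.eq_zero_or_pos lst.length with h0 | h0
        · exfalso
          rw [List.length_eq_zero_iff] at h0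
          rw [h0, wp_nil, mul_one] at hwu
          rw [← hwu] at hut
          omega
        · exact h0
      have hu_lt : cl M u < n := by omega
      have hu_s : ∀ k, 0 ≤ (rho M hs u) (sroot s) k :=
        IH (cl M u) hu_lt u rfl s hus
      have hu_t : ∀ k, 0 ≤ (rho M hs u) (sroot t) k :=
        IH (cl M u) hu_lt u rfl t hut
      -- given a shorter expression for w * cgen s, contradiction
      have contra : ∀ (c'' : List I), u * wp M c'' = w * cgen M s →
          cl M u + c''.length < n + 1 → False := by
        intro c'' h1 h2
        have : cl M (w * cgen M s) ≤ cl M u + c''.length := by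
          rw [← h1]
          calc cl M (u * wp M c'') ≤ cl M u + cl M (wp M c'') := cl_mul_le M _ _
            _ ≤ cl M u + c''.length := by
                have := cl_le M (rfl : wp M c'' = wp M c'')
                omega
        omega
      rcases hs s t with h1 | h2 | h3
      · exact absurd ((M.one_iff s t).1 h1) hst
      · -- m = 2
        obtain ⟨c, hc, hclen, hcm⟩ := canon2 M h2 lst hmem
        have hval : (rho M hs w) (sroot s) = (rho M hs u) ((rho M hs (wp M c)) (sroot s)) := by
          rw [hwu, ← hc, map_mul, linequiv_mul_apply]
        rcases hcm with rfl | rfl | rfl | rfl | rfl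
        · rw [hval, rho_wp]
          exact hu_s k
        · -- c = [s] : bad
          exact (contra [] (by
              rw [wp_nil, mul_one, hwu, ← hc, wp_singleton, mul_assoc, cgen_sq, mul_one])
              (by simp; omega)).elim
        · -- c = [t] : good
          rw [hval, rho_wp]
          simp only [List.foldr_cons, List.foldr_nil]
          rw [srefl_sroot_of_two M h2]
          exact hu_s k
        · -- c = [s,t] : bad, wp [s,t] * cgen s = cgen t
          refine (contra [t] ?_ ?_).elim
          · rw [hwu, ← hc, mul_assoc]
            congr 1
            simp only [wp_cons, wp_nil, mul_one, ← mul_assoc]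
            rw [cgen_comm M h2, mul_assoc, cgen_sq, mul_one]
          · simp only [List.length_cons, List.length_nil]
            simp only [List.length_cons, List.length_nil] at hclen
            omega
        · -- c = [t,s] : bad, wp [t,s] * cgen s = cgen t
          refine (contra [t] ?_ ?_).elim
          · rw [hwu, ← hc, mul_assoc]
            congr 1
            simp only [wp_cons, wp_nil, mul_one, ← mul_assoc]
            rw [mul_assoc, cgen_sq, mul_one]
          · simp only [List.length_cons, List.length_nil]
            simp only [List.length_cons, List.length_nil] at hclen
            omega
      · -- m = 3
        obtain ⟨c, hc, hclen, hcm⟩ := canon3 M h3 lst hmem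
        have hval : (rho M hs w) (sroot s) = (rho M hs u) ((rho M hs (wp M c)) (sroot s)) := by
          rw [hwu, ← hc, map_mul, linequiv_mul_apply]
        rcases hcm with rfl | rfl | rfl | rfl | rfl | rfl
        · rw [hval, rho_wp]
          exact hu_s k
        · exact (contra [] (by
            rw [wp_nil, mul_one, hwu, ← hc, wp_singleton, mul_assoc, cgen_sq, mul_one])
            (by simp; omega)).elim
        · -- c = [t] : good, value = sroot s + sroot t
          rw [hval, rho_wp]
          simp only [List.foldr_cons, List.foldr_nil]
          rw [srefl_sroot_of_three M h3]
          rw [map_add]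
          have := hu_s k
          have := hu_t k
          have happ : ((rho M hs u) (sroot s) + (rho M hs u) (sroot t)) k
              = (rho M hs u) (sroot s) k + (rho M hs u) (sroot t) k := rfl
          rw [happ]
          positivity
        · -- c = [s,t] : good, value = sroot t
          rw [hval, rho_wp]
          simp only [List.foldr_cons, List.foldr_nil]
          rw [srefl_sroot_of_three M h3, srefl_gamma_of_three M h3]
          exact hu_t k
        · -- c = [t,s] : bad, wp [t,s] * cgen s = cgen t
          refine (contra [t] ?_ ?_).elim
          · rw [hwu, ← hc, mul_assoc]
            congr 1
            simp only [wp_cons, wp_nil, mul_one, ← mul_assoc]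
            rw [mul_assoc, cgen_sq, mul_one]
          · simp only [List.length_cons, List.length_nil]
            simp only [List.length_cons, List.length_nil] at hclen
            omega
        · -- c = [s,t,s] : bad, wp [s,t,s] * cgen s = wp [s,t]
          refine (contra [s,t] ?_ ?_).elim
          · rw [hwu, ← hc, mul_assoc]
            congr 1
            simp only [wp_cons, wp_nil, mul_one, ← mul_assoc]
            rw [mul_assoc (cgen M s * cgen M t), cgen_sq, mul_one]
          · simp only [List.length_cons, List.length_nil]
            simp only [List.length_cons, List.length_nil] at hclen
            omega

end Action

section RootTheory

variable [Fintype I] [DecidableEq I] (M : CoxM I)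

theorem foldr_eq_rho (hs : M.Small) (l : List I) (v : I → ℝ) :
    l.foldr (srefl M) v = rho M hs (wp M l) v := (rho_wp M hs l v).symm

theorem isroot_exists_word {β : I → ℝ} (hβ : IsRoot M β) :
    ∃ (l : List I) (s : I), β = l.foldr (srefl M) (sroot s) := by
  induction hβ with
  | simple i => exact ⟨[], i, rfl⟩
  | srefl i v _ ih =>
      obtain ⟨l, s, rfl⟩ := ih
      exact ⟨i :: l, s, rfl⟩

theorem root_norm {β : I → ℝ} (hβ : IsRoot M β) : bform M β β = 2 := by
  induction hβ with
  | simple i => rw [bform_sroot_sroot, cf_self]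
  | srefl i v _ ih => rw [bform_invariant, ih]

theorem root_ne_zero {β : I → ℝ} (hβ : IsRoot M β) : β ≠ 0 := by
  intro h
  have h2 := root_norm M hβ
  rw [h] at h2
  simp [bform] at h2

theorem root_pos_or_neg (hs : M.Small) {β : I → ℝ} (hβ : IsRoot M β) :
    (∀ k, 0 ≤ β k) ∨ (∀ k, β k ≤ 0) := by
  obtain ⟨l, s, rfl⟩ := isroot_exists_word M hβ
  rw [foldr_eq_rho M hs]
  set w := wp M l with hw
  rcases cl_mul_cgen M w s with h1 | h1
  · left
    exact nonneg_of_cl_incr M hs (cl M w) w rfl s h1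
  · right
    set w' := w * cgen M s with hw'
    have hww : w = w' * cgen M s := by rw [hw', mul_assoc, cgen_sq, mul_one]
    have h2 : cl M (w' * cgen M s) = cl M w' + 1 := by rw [← hww, h1]
    have h3 := nonneg_of_cl_incr M hs (cl M w') w' rfl s h2
    intro k
    have h4 : (rho M hs w) (sroot s) = -(rho M hs w') (sroot s) := by
      rw [hww, map_mul, linequiv_mul_apply, rho_cgen, sreflE_apply, srefl_sroot_self, map_neg]
    rw [h4]
    have := h3 k
    simp only [Pi.neg_apply]
    linarith

theorem sq_eq_one_aux {r : ℝ} (h : 2 * (r * r) = 2) (hr : 0 ≤ r) : r = 1 := by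
  nlinarith

/-- The fundamental fact: s_i permutes the positive roots other than α_i. -/
theorem srefl_pos (hs : M.Small) {β : I → ℝ} (hβ : IsPos M β) {i : I}
    (hne : β ≠ sroot i) : IsPos M (srefl M i β) := by
  obtain ⟨hroot, hpos⟩ := hβ
  refine ⟨IsRoot.srefl i β hroot, ?_⟩
  rcases root_pos_or_neg M hs (IsRoot.srefl i β hroot) with h | h
  · exact h
  · exfalso
    have hco : ∀ k, k ≠ i → β k = 0 := by
      intro k hk
      have h1 := h k
      rw [srefl_apply_ne M i β hk] at h1
      exact le_antisymm h1 (hpos k)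
    have hβeq : β = β i • sroot i := by
      funext k
      by_cases hk : k = i
      · subst hk; simp [sroot]
      · rw [hco k hk]; simp [sroot, Pi.single_apply, hk]
    have hnorm := root_norm M hroot
    rw [hβeq, bform_smul_left, bform_smul_right, bform_sroot_sroot, cf_self] at hnorm
    have h5 : β i = 1 := by
      apply sq_eq_one_aux
      · nlinarith
      · exact hpos i
    apply hne
    rw [hβeq, h5, one_smul]

theorem dep_set_nonempty (hs : M.Small) {β : I → ℝ} (hβ : IsRoot M β) :
    {n | ∃ l : List I, l.length = n ∧ ∃ k, l.foldr (srefl M) β k < 0}.Nonempty := by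
  obtain ⟨l, s, rfl⟩ := isroot_exists_word M hβ
  obtain ⟨l', hl'⟩ := exists_word M (wp M l)⁻¹
  refine ⟨(s :: l').length, s :: l', rfl, s, ?_⟩
  have h1 : (s :: l').foldr (srefl M) (l.foldr (srefl M) (sroot s)) =
      srefl M s (l'.foldr (srefl M) (l.foldr (srefl M) (sroot s))) := rfl
  have h2 : l'.foldr (srefl M) (l.foldr (srefl M) (sroot s)) = sroot s := by
    rw [foldr_eq_rho M hs, foldr_eq_rho M hs, hl']
    rw [← linequiv_mul_apply, ← map_mul, inv_mul_cancel, map_one]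
    rfl
  rw [h1, h2, srefl_sroot_self]
  simp [sroot]

theorem dep_mem (hs : M.Small) {β : I → ℝ} (hβ : IsRoot M β) :
    ∃ l : List I, l.length = dep M β ∧ ∃ k, l.foldr (srefl M) β k < 0 :=
  Nat.sInf_mem (dep_set_nonempty M hs hβ)

theorem dep_le {β : I → ℝ} {l : List I} (h : ∃ k, l.foldr (srefl M) β k < 0) :
    dep M β ≤ l.length :=
  Nat.sInf_le ⟨l, rfl, h⟩

theorem dep_pos (hs : M.Small) {β : I → ℝ} (hβ : IsPos M β) : 1 ≤ dep M β := by
  by_contra h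
  push_neg at h
  interval_cases hd : dep M β
  · obtain ⟨l, hl, k, hk⟩ := dep_mem M hs hβ.1
    rw [hd, List.length_eq_zero_iff] at hl
    subst hl
    simp only [List.foldr_nil] at hk
    exact absurd hk (not_lt.2 (hβ.2 k))

theorem dep_srefl_le (hs : M.Small) {β : I → ℝ} (hβ : IsRoot M β) (i : I) :
    dep M (srefl M i β) ≤ dep M β + 1 := by
  obtain ⟨l, hl, k, hk⟩ := dep_mem M hs hβ
  have h2 : dep M (srefl M i β) ≤ (l ++ [i]).length := by
    apply dep_le M
    refine ⟨k, ?_⟩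
    rw [List.foldr_append]
    simp only [List.foldr_cons, List.foldr_nil]
    rw [srefl_srefl]
    exact hk
  simp only [List.length_append, List.length_cons, List.length_nil] at h2
  omega

theorem le_dep_srefl (hs : M.Small) {β : I → ℝ} (hβ : IsRoot M β) (i : I) :
    dep M β ≤ dep M (srefl M i β) + 1 := by
  have := dep_srefl_le M hs (IsRoot.srefl i β hβ) i
  rwa [srefl_srefl] at this

theorem dep_sroot (hs : M.Small) (s : I) : dep M (sroot s) = 1 := by
  have h1 : dep M (sroot s) ≤ 1 := by
    apply dep_le M (l := [s])
    refine ⟨s, ?_⟩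
    simp only [List.foldr_cons, List.foldr_nil]
    rw [srefl_sroot_self]
    simp [sroot]
  have h2 := dep_pos M hs ⟨IsRoot.simple s, fun k => sroot_nonneg s k⟩
  omega

theorem srefl_fix {β : I → ℝ} {i : I} (h : bform M β (sroot i) = 0) :
    srefl M i β = β := by
  rw [srefl_def, h, zero_smul, sub_zero]

theorem cf_nonpos (hs : M.Small) {s t : I} (hne : t ≠ s) : cf M t s ≤ 0 := by
  rcases hs t s with h | h | h
  · exact absurd ((M.one_iff t s).1 h) hne
  · rw [cf_of_two M h]
  · rw [cf_of_three M h]; norm_num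

theorem neg_sroot_not_pos (i : I) (hβ : IsPos M (-sroot i)) : False := by
  have := hβ.2 i
  simp [sroot] at this
  linarith

/-- The depth sign criterion, downward direction. -/
theorem dep_down (hs : M.Small) : ∀ d : ℕ, ∀ β : I → ℝ, IsPos M β → dep M β = d →
    ∀ s : I, 0 < bform M β (sroot s) → β ≠ sroot s → dep M (srefl M s β) < d := by
  intro d
  induction d using Nat.strong_induction_on with
  | _ d IH =>
  intro β hβ hd s hx hne
  have hd1 : 1 ≤ d := by rw [← hd]; exact dep_pos M hs hβ
  obtain ⟨l, hl, k, hk⟩ := dep_mem M hs hβ.1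
  rcases List.eq_nil_or_concat l with rfl | ⟨l₁, t, rfl⟩
  · rw [hd] at hl; simp at hl; omega
  · rw [List.concat_eq_append] at hl hk
    have hβt : β ≠ sroot t := by
      intro h
      subst h
      have h1 : dep M (sroot t) = d := hd
      rw [dep_sroot M hs] at h1
      -- d = 1; bform (sroot t) (sroot s) > 0 forces t = s
      have hts : t ≠ s := fun h => hne (by rw [h])
      have h2 := cf_nonpos M hs hts
      rw [bform_sroot_sroot] at hx
      linarith
    have hβ' : IsPos M (srefl M t β) := srefl_pos M hs hβ hβt
    have hdep' : dep M (srefl M t β) = d - 1 := by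
      have h1 : dep M (srefl M t β) ≤ d - 1 := by
        have h2 : ∃ k, l₁.foldr (srefl M) (srefl M t β) k < 0 := by
          refine ⟨k, ?_⟩
          rw [List.foldr_append] at hk
          simpa using hk
        have := dep_le M h2
        rw [hd] at hl
        simp only [List.length_append, List.length_cons, List.length_nil] at hl
        omega
      have h3 := le_dep_srefl M hs hβ.1 t
      omega
    by_cases hts : t = s
    · subst hts
      rw [hdep']
      omega
    have hy : 0 < bform M β (sroot t) := by
      rcases lt_trichotomy (bform M β (sroot t)) 0 with hy | hy | hy
      · exfalso
        -- apply IH to β' = srefl t β with letter t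
        have h1 : 0 < bform M (srefl M t β) (sroot t) := by
          rw [bform_srefl_left, bform_sroot_sroot, cf_self]
          linarith
        have h2 : srefl M t β ≠ sroot t := by
          intro h
          apply neg_sroot_not_pos M t
          have : β = srefl M t (sroot t) := by rw [← h, srefl_srefl]
          rw [srefl_sroot_self] at this
          rw [← this]
          exact hβ
        have h3 := IH (d-1) (by omega) (srefl M t β) hβ' hdep' t h1 h2
        rw [srefl_srefl] at h3
        omega
      · exfalso
        have := srefl_fix M hy
        rw [this] at hdep'
        omega
      · exact hy
    -- now t ≠ s, bform β (sroot s) > 0, bform β (sroot t) > 0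
    rcases hs s t with h1 | h2 | h3
    · exact absurd ((M.one_iff s t).1 h1).symm hts
    · -- m s t = 2
      have hts2 : M.m t s = 2 := by rw [M.symm]; exact h2
      have hcf : cf M t s = 0 := cf_of_two M hts2
      have hx' : 0 < bform M (srefl M t β) (sroot s) := by
        rw [bform_srefl_left, bform_sroot_sroot, hcf]
        linarith
      have hne' : srefl M t β ≠ sroot s := by
        intro h
        apply hne
        have : β = srefl M t (sroot s) := by rw [← h, srefl_srefl]
        rwa [srefl_sroot_of_two M h2] at this
      have h4 := IH (d-1) (by omega) (srefl M t β) hβ' hdep' s hx' hne'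
      have h5 : srefl M s (srefl M t β) = srefl M t (srefl M s β) := by
        rw [← srefl_comm M (cf_of_two M h2)]
      rw [h5] at h4
      have h6 := le_dep_srefl M hs (IsRoot.srefl s β hβ.1) t
      omega
    · -- m s t = 3
      have hts3 : M.m t s = 3 := by rw [M.symm]; exact h3
      have hcf : cf M t s = -1 := cf_of_three M hts3
      have hcf' : cf M s t = -1 := cf_of_three M h3
      have hx' : 0 < bform M (srefl M t β) (sroot s) := by
        rw [bform_srefl_left, bform_sroot_sroot, hcf]
        linarith
      by_cases hγ : srefl M t β = sroot s
      · -- β = sroot s + sroot t, srefl s β = sroot t, d = 2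
        have hβeq : β = sroot s + sroot t := by
          have : β = srefl M t (sroot s) := by rw [← hγ, srefl_srefl]
          rwa [srefl_sroot_of_three M h3] at this
        have hsβ : srefl M s β = sroot t := by
          rw [hβeq, srefl_gamma_of_three M h3]
        rw [hsβ, dep_sroot M hs]
        have : dep M (sroot s) = d - 1 := by rw [← hγ]; exact hdep'
        rw [dep_sroot M hs] at this
        omega
      · have h4 := IH (d-1) (by omega) (srefl M t β) hβ' hdep' s hx' hγ
        -- β'' = srefl s (srefl t β)
        have hβ'' : IsPos M (srefl M s (srefl M t β)) := srefl_pos M hs hβ' hγ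
        have hd'' : dep M (srefl M s (srefl M t β)) ≤ d - 2 := by omega
        have hx'' : 0 < bform M (srefl M s (srefl M t β)) (sroot t) := by
          rw [bform_srefl_left, bform_srefl_left, bform_srefl_left,
            bform_sroot_sroot, bform_sroot_sroot, bform_sroot_sroot, hcf, hcf', cf_self]
          linarith
        have hne'' : srefl M s (srefl M t β) ≠ sroot t := by
          intro h
          apply hne
          have e1 : srefl M t β = srefl M s (sroot t) := by rw [← h, srefl_srefl]
          have e2 : srefl M s (sroot t) = sroot t + sroot s := srefl_sroot_of_three M hts3
          have e3 : β = srefl M t (sroot t + sroot s) := by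
            rw [← e2, ← e1, srefl_srefl]
          rw [e3, srefl_gamma_of_three M hts3]
        have h7 := IH (dep M (srefl M s (srefl M t β))) (by omega)
          (srefl M s (srefl M t β)) hβ'' rfl t hx'' hne''
        have h8 : srefl M t (srefl M s (srefl M t β)) = srefl M s (srefl M t (srefl M s β)) :=
          srefl_braid M hcf β
        rw [h8] at h7
        have h9 := le_dep_srefl M hs (IsRoot.srefl s β hβ.1) t
        have h10 := le_dep_srefl M hs (IsRoot.srefl t (srefl M s β)
          (IsRoot.srefl s β hβ.1)) s
        omega

/-- The depth sign criterion, upward direction. -/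
theorem dep_up (hs : M.Small) {β : I → ℝ} (hβ : IsPos M β) {s : I}
    (hx : bform M β (sroot s) < 0) : dep M β < dep M (srefl M s β) := by
  have hne : β ≠ sroot s := by
    intro h
    rw [h, bform_sroot_sroot, cf_self] at hx
    linarith
  have hβ' : IsPos M (srefl M s β) := srefl_pos M hs hβ hne
  have hx' : 0 < bform M (srefl M s β) (sroot s) := by
    rw [bform_srefl_left, bform_sroot_sroot, cf_self]
    linarith
  have hne' : srefl M s β ≠ sroot s := by
    intro h
    apply neg_sroot_not_pos M s
    have : β = srefl M s (sroot s) := by rw [← h, srefl_srefl]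
    rw [srefl_sroot_self] at this
    rw [← this]
    exact hβ
  have := dep_down M hs (dep M (srefl M s β)) (srefl M s β) hβ' rfl s hx' hne'
  rwa [srefl_srefl] at this

end RootTheory

section Phi

variable [Fintype I] [DecidableEq I] (M : CoxM I)

variable (R : Type) [CommRing R]

variable (a b c d : R)

theorem phi_ev (i : I) (α : Pos M) :
    phi M R a b c d i (ev M R α) = phiAux M R a b c d i α := by
  rw [phi, ev, Finsupp.lift_apply]
  rw [Finsupp.sum_single_index (by rw [zero_smul]), one_smul]

theorem sroot_ne_neg_of_pos {v : I → ℝ} (hv : IsPos M v) (i : I) :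
    v ≠ -sroot i := by
  intro h
  have := hv.2 i
  rw [h] at this
  simp [sroot] at this
  linarith

theorem srefl_ne_sroot_self {v : I → ℝ} (hv : IsPos M v) (i : I) :
    srefl M i v ≠ sroot i := by
  intro h
  have h1 : v = srefl M i (sroot i) := by rw [← h, srefl_srefl]
  rw [srefl_sroot_self] at h1
  exact sroot_ne_neg_of_pos M hv i h1

theorem bform_srefl_self (i : I) (v : I → ℝ) :
    bform M (srefl M i v) (sroot i) = -bform M v (sroot i) := by
  rw [bform_srefl_left, bform_sroot_sroot, cf_self]
  ring

theorem bform_srefl_other (i j : I) (v : I → ℝ) :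
    bform M (srefl M i v) (sroot j) =
      bform M v (sroot j) - bform M v (sroot i) * cf M i j := by
  rw [bform_srefl_left, bform_sroot_sroot]

theorem srefl_ne_of_bform_ne {v : I → ℝ} {i : I} (h : bform M v (sroot i) ≠ 0) :
    srefl M i v ≠ v := by
  intro he
  apply h
  have h1 : bform M v (sroot i) • sroot i = 0 := by
    have := he
    rw [srefl_def] at this
    have h2 : v - bform M v (sroot i) • sroot i - v = 0 := by rw [this]; abel
    calc bform M v (sroot i) • sroot i
        = -(v - bform M v (sroot i) • sroot i - v) := by module
      _ = 0 := by rw [h2, neg_zero]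
  have h2 := congrFun h1 i
  simp [sroot] at h2
  exact h2

theorem phi_ev_self (i : I) : phi M R a b c d i (ev M R (simplePos M i)) = 0 := by
  rw [phi_ev, phiAux, if_pos (show ((simplePos M i : Pos M)).1 = sroot i from rfl)]

theorem phi_ev_fix (i : I) (α : Pos M) (h : bform M α.1 (sroot i) = 0) :
    phi M R a b c d i (ev M R α) = d • ev M R α := by
  have h1 : α.1 ≠ sroot i := by
    intro he
    rw [he, bform_sroot_sroot, cf_self] at h
    norm_num at h
  have h2 : srefl M i α.1 = α.1 := srefl_fix M h
  rw [phi_ev, phiAux, if_neg h1, if_pos h2]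

theorem phi_ev_up (hs : M.Small) (i : I) (α : Pos M) (h : bform M α.1 (sroot i) < 0) :
    phi M R a b c d i (ev M R α) =
      a • ev M R α + c • ev M R ⟨srefl M i α.1,
        srefl_pos M hs α.2 (by
          intro he
          rw [he, bform_sroot_sroot, cf_self] at h
          norm_num at h)⟩ := by
  have hne : α.1 ≠ sroot i := by
    intro he
    rw [he, bform_sroot_sroot, cf_self] at h
    norm_num at h
  have h2 : srefl M i α.1 ≠ α.1 := srefl_ne_of_bform_ne M (ne_of_lt h)
  have h3 : IsPos M (srefl M i α.1) := srefl_pos M hs α.2 hne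
  have h4 : dep M α.1 < dep M (srefl M i α.1) := dep_up M hs α.2 h
  rw [phi_ev, phiAux, if_neg hne, if_neg h2, dif_pos h3, if_pos h4]

theorem phi_ev_down (hs : M.Small) (i : I) (α : Pos M) (h : 0 < bform M α.1 (sroot i))
    (hne : α.1 ≠ sroot i) :
    phi M R a b c d i (ev M R α) =
      b • ev M R ⟨srefl M i α.1, srefl_pos M hs α.2 hne⟩ := by
  have h2 : srefl M i α.1 ≠ α.1 := srefl_ne_of_bform_ne M (ne_of_gt h)
  have h3 : IsPos M (srefl M i α.1) := srefl_pos M hs α.2 hne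
  have h4 : ¬ (dep M α.1 < dep M (srefl M i α.1)) := by
    have := dep_down M hs (dep M α.1) α.1 α.2 rfl i h hne
    omega
  rw [phi_ev, phiAux, if_neg hne, if_neg h2, dif_pos h3, if_neg h4]

end Phi

section PhiRel

variable [Fintype I] [DecidableEq I] (M : CoxM I) (R : Type) [CommRing R] (a b c d : R)

theorem phi_ev_up' (hs : M.Small) (i : I) (α β : Pos M)
    (h : bform M α.1 (sroot i) < 0) (hβ : β.1 = srefl M i α.1) :
    phi M R a b c d i (ev M R α) = a • ev M R α + c • ev M R β := by
  obtain ⟨v, hv⟩ := β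
  simp only [] at hβ
  subst hβ
  exact phi_ev_up M R a b c d hs i α h

theorem phi_ev_down' (hs : M.Small) (i : I) (α β : Pos M)
    (h : 0 < bform M α.1 (sroot i)) (hne : α.1 ≠ sroot i) (hβ : β.1 = srefl M i α.1) :
    phi M R a b c d i (ev M R α) = b • ev M R β := by
  obtain ⟨v, hv⟩ := β
  simp only [] at hβ
  subst hβ
  exact phi_ev_down M R a b c d hs i α h hne

theorem srefl_avoid2 (hs : M.Small) {s t : I} (hst : M.m s t = 2) {v : I → ℝ}
    (hv : IsPos M v) (h1 : v ≠ sroot s) (h2 : v ≠ sroot t) :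
    srefl M s v ≠ sroot s ∧ srefl M s v ≠ sroot t := by
  constructor
  · exact srefl_ne_sroot_self M hv s
  · intro h
    apply h2
    have : v = srefl M s (sroot t) := by rw [← h, srefl_srefl]
    rwa [srefl_sroot_of_two M (by rw [M.symm]; exact hst)] at this

theorem phi_comm2_ev (hs : M.Small) {i j : I} (h2 : M.m i j = 2) (hij : i ≠ j) (α : Pos M) :
    phi M R a b c d i (phi M R a b c d j (ev M R α)) =
      phi M R a b c d j (phi M R a b c d i (ev M R α)) := by
  have hji2 : M.m j i = 2 := by rw [M.symm]; exact h2
  have hcf : cf M i j = 0 := cf_of_two M h2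
  have hcf' : cf M j i = 0 := cf_of_two M hji2
  by_cases hαi : α.1 = sroot i
  · have e0 : α = simplePos M i := Subtype.ext hαi
    have hy0 : bform M α.1 (sroot j) = 0 := by rw [hαi, bform_sroot_sroot, hcf]
    have L : phi M R a b c d i (phi M R a b c d j (ev M R α)) = 0 := by
      rw [phi_ev_fix M R a b c d j α hy0, map_smul, e0, phi_ev_self, smul_zero]
    have Rr : phi M R a b c d j (phi M R a b c d i (ev M R α)) = 0 := by
      rw [e0, phi_ev_self, map_zero]
    rw [L, Rr]
  by_cases hαj : α.1 = sroot j
  · have e0 : α = simplePos M j := Subtype.ext hαj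
    have hx0 : bform M α.1 (sroot i) = 0 := by rw [hαj, bform_sroot_sroot, hcf']
    have L : phi M R a b c d i (phi M R a b c d j (ev M R α)) = 0 := by
      rw [e0, phi_ev_self, map_zero]
    have Rr : phi M R a b c d j (phi M R a b c d i (ev M R α)) = 0 := by
      rw [phi_ev_fix M R a b c d i α hx0, map_smul, e0, phi_ev_self, smul_zero]
    rw [L, Rr]
  -- generic case
  have hβp : IsPos M (srefl M i α.1) := srefl_pos M hs α.2 hαi
  have hδp : IsPos M (srefl M j α.1) := srefl_pos M hs α.2 hαj
  have hβi : srefl M i α.1 ≠ sroot i := (srefl_avoid2 M hs h2 α.2 hαi hαj).1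
  have hβj : srefl M i α.1 ≠ sroot j := (srefl_avoid2 M hs h2 α.2 hαi hαj).2
  have hδj : srefl M j α.1 ≠ sroot j := (srefl_avoid2 M hs hji2 α.2 hαj hαi).1
  have hδi : srefl M j α.1 ≠ sroot i := (srefl_avoid2 M hs hji2 α.2 hαj hαi).2
  have hβyv : bform M (srefl M i α.1) (sroot j) = bform M α.1 (sroot j) := by
    rw [bform_srefl_other, hcf]; ring
  have hδxv : bform M (srefl M j α.1) (sroot i) = bform M α.1 (sroot i) := by
    rw [bform_srefl_other, hcf']; ring
  have hεp : IsPos M (srefl M i (srefl M j α.1)) := srefl_pos M hs hδp hδi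
  have hε'p : IsPos M (srefl M j (srefl M i α.1)) := srefl_pos M hs hβp hβj
  have hcross : (⟨srefl M i (srefl M j α.1), hεp⟩ : Pos M)
      = ⟨srefl M j (srefl M i α.1), hε'p⟩ :=
    Subtype.ext (srefl_comm M hcf α.1)
  rcases lt_trichotomy (bform M α.1 (sroot i)) 0 with hx | hx | hx <;>
    rcases lt_trichotomy (bform M α.1 (sroot j)) 0 with hy | hy | hy
  · -- x<0, y<0
    have Li : phi M R a b c d i (ev M R α) = a • ev M R α + c • ev M R ⟨srefl M i α.1, hβp⟩ :=
      phi_ev_up' M R a b c d hs i α _ hx rfl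
    have Lj : phi M R a b c d j (ev M R α) = a • ev M R α + c • ev M R ⟨srefl M j α.1, hδp⟩ :=
      phi_ev_up' M R a b c d hs j α _ hy rfl
    have Liδ : phi M R a b c d i (ev M R ⟨srefl M j α.1, hδp⟩)
        = a • ev M R ⟨srefl M j α.1, hδp⟩ + c • ev M R ⟨srefl M i (srefl M j α.1), hεp⟩ :=
      phi_ev_up' M R a b c d hs i _ _ (by rw [hδxv]; exact hx) rfl
    have Ljβ : phi M R a b c d j (ev M R ⟨srefl M i α.1, hβp⟩)
        = a • ev M R ⟨srefl M i α.1, hβp⟩ + c • ev M R ⟨srefl M j (srefl M i α.1), hε'p⟩ :=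
      phi_ev_up' M R a b c d hs j _ _ (by rw [hβyv]; exact hy) rfl
    simp only [map_add, map_smul, Li, Lj, Liδ, Ljβ, hcross]
    module
  · -- x<0, y=0
    have Li : phi M R a b c d i (ev M R α) = a • ev M R α + c • ev M R ⟨srefl M i α.1, hβp⟩ :=
      phi_ev_up' M R a b c d hs i α _ hx rfl
    have Lj : phi M R a b c d j (ev M R α) = d • ev M R α :=
      phi_ev_fix M R a b c d j α hy
    have Ljβ : phi M R a b c d j (ev M R ⟨srefl M i α.1, hβp⟩)
        = d • ev M R ⟨srefl M i α.1, hβp⟩ :=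
      phi_ev_fix M R a b c d j _ (by rw [hβyv]; exact hy)
    simp only [map_add, map_smul, Li, Lj, Ljβ]
    module
  · -- x<0, y>0
    have Li : phi M R a b c d i (ev M R α) = a • ev M R α + c • ev M R ⟨srefl M i α.1, hβp⟩ :=
      phi_ev_up' M R a b c d hs i α _ hx rfl
    have Lj : phi M R a b c d j (ev M R α) = b • ev M R ⟨srefl M j α.1, hδp⟩ :=
      phi_ev_down' M R a b c d hs j α _ hy hαj rfl
    have Liδ : phi M R a b c d i (ev M R ⟨srefl M j α.1, hδp⟩)
        = a • ev M R ⟨srefl M j α.1, hδp⟩ + c • ev M R ⟨srefl M i (srefl M j α.1), hεp⟩ :=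
      phi_ev_up' M R a b c d hs i _ _ (by rw [hδxv]; exact hx) rfl
    have Ljβ : phi M R a b c d j (ev M R ⟨srefl M i α.1, hβp⟩)
        = b • ev M R ⟨srefl M j (srefl M i α.1), hε'p⟩ :=
      phi_ev_down' M R a b c d hs j _ _ (by rw [hβyv]; exact hy) hβj rfl
    simp only [map_add, map_smul, Li, Lj, Liδ, Ljβ, hcross]
    module
  · -- x=0, y<0
    have Li : phi M R a b c d i (ev M R α) = d • ev M R α :=
      phi_ev_fix M R a b c d i α hx
    have Lj : phi M R a b c d j (ev M R α) = a • ev M R α + c • ev M R ⟨srefl M j α.1, hδp⟩ :=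
      phi_ev_up' M R a b c d hs j α _ hy rfl
    have Liδ : phi M R a b c d i (ev M R ⟨srefl M j α.1, hδp⟩)
        = d • ev M R ⟨srefl M j α.1, hδp⟩ :=
      phi_ev_fix M R a b c d i _ (by rw [hδxv]; exact hx)
    simp only [map_add, map_smul, Li, Lj, Liδ]
    module
  · -- x=0, y=0
    have Li : phi M R a b c d i (ev M R α) = d • ev M R α :=
      phi_ev_fix M R a b c d i α hx
    have Lj : phi M R a b c d j (ev M R α) = d • ev M R α :=
      phi_ev_fix M R a b c d j α hy
    simp only [map_add, map_smul, Li, Lj]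
  · -- x=0, y>0
    have Li : phi M R a b c d i (ev M R α) = d • ev M R α :=
      phi_ev_fix M R a b c d i α hx
    have Lj : phi M R a b c d j (ev M R α) = b • ev M R ⟨srefl M j α.1, hδp⟩ :=
      phi_ev_down' M R a b c d hs j α _ hy hαj rfl
    have Liδ : phi M R a b c d i (ev M R ⟨srefl M j α.1, hδp⟩)
        = d • ev M R ⟨srefl M j α.1, hδp⟩ :=
      phi_ev_fix M R a b c d i _ (by rw [hδxv]; exact hx)
    simp only [map_add, map_smul, Li, Lj, Liδ]
    module
  · -- x>0, y<0
    have Li : phi M R a b c d i (ev M R α) = b • ev M R ⟨srefl M i α.1, hβp⟩ :=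
      phi_ev_down' M R a b c d hs i α _ hx hαi rfl
    have Lj : phi M R a b c d j (ev M R α) = a • ev M R α + c • ev M R ⟨srefl M j α.1, hδp⟩ :=
      phi_ev_up' M R a b c d hs j α _ hy rfl
    have Liδ : phi M R a b c d i (ev M R ⟨srefl M j α.1, hδp⟩)
        = b • ev M R ⟨srefl M i (srefl M j α.1), hεp⟩ :=
      phi_ev_down' M R a b c d hs i _ _ (by rw [hδxv]; exact hx) hδi rfl
    have Ljβ : phi M R a b c d j (ev M R ⟨srefl M i α.1, hβp⟩)
        = a • ev M R ⟨srefl M i α.1, hβp⟩ + c • ev M R ⟨srefl M j (srefl M i α.1), hε'p⟩ :=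
      phi_ev_up' M R a b c d hs j _ _ (by rw [hβyv]; exact hy) rfl
    simp only [map_add, map_smul, Li, Lj, Liδ, Ljβ, hcross]
    module
  · -- x>0, y=0
    have Li : phi M R a b c d i (ev M R α) = b • ev M R ⟨srefl M i α.1, hβp⟩ :=
      phi_ev_down' M R a b c d hs i α _ hx hαi rfl
    have Lj : phi M R a b c d j (ev M R α) = d • ev M R α :=
      phi_ev_fix M R a b c d j α hy
    have Ljβ : phi M R a b c d j (ev M R ⟨srefl M i α.1, hβp⟩)
        = d • ev M R ⟨srefl M i α.1, hβp⟩ :=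
      phi_ev_fix M R a b c d j _ (by rw [hβyv]; exact hy)
    simp only [map_add, map_smul, Li, Lj, Ljβ]
    module
  · -- x>0, y>0
    have Li : phi M R a b c d i (ev M R α) = b • ev M R ⟨srefl M i α.1, hβp⟩ :=
      phi_ev_down' M R a b c d hs i α _ hx hαi rfl
    have Lj : phi M R a b c d j (ev M R α) = b • ev M R ⟨srefl M j α.1, hδp⟩ :=
      phi_ev_down' M R a b c d hs j α _ hy hαj rfl
    have Liδ : phi M R a b c d i (ev M R ⟨srefl M j α.1, hδp⟩)
        = b • ev M R ⟨srefl M i (srefl M j α.1), hεp⟩ :=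
      phi_ev_down' M R a b c d hs i _ _ (by rw [hδxv]; exact hx) hδi rfl
    have Ljβ : phi M R a b c d j (ev M R ⟨srefl M i α.1, hβp⟩)
        = b • ev M R ⟨srefl M j (srefl M i α.1), hε'p⟩ :=
      phi_ev_down' M R a b c d hs j _ _ (by rw [hβyv]; exact hy) hβj rfl
    simp only [map_add, map_smul, Li, Lj, Liδ, Ljβ, hcross]

end PhiRel

section Braid3

variable [Fintype I] [DecidableEq I] (M : CoxM I) (R : Type) [CommRing R] (a b c d : R)

theorem sroot_ne {i j : I} (hij : i ≠ j) : sroot i ≠ (sroot j : I → ℝ) := by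
  intro h
  have := congrFun h i
  simp [sroot, Pi.single_apply, hij] at this

theorem sroot_ne_gamma (i j : I) : (sroot i : I → ℝ) ≠ sroot i + sroot j := by
  intro h
  have h2 := congrFun h j
  by_cases hij : j = i
  · subst hij
    simp only [sroot, Pi.add_apply, Pi.single_eq_same] at h2
    norm_num at h2
  · simp [sroot, Pi.single_apply, hij] at h2

theorem srefl_avoid (hs : M.Small) {s t : I} (hst : M.m s t = 3) {v : I → ℝ}
    (hv : IsPos M v) (h1 : v ≠ sroot t) (h2 : v ≠ sroot s + sroot t) :
    srefl M s v ≠ sroot s ∧ srefl M s v ≠ sroot t ∧ srefl M s v ≠ sroot s + sroot t := by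
  have hts : M.m t s = 3 := by rw [M.symm]; exact hst
  refine ⟨srefl_ne_sroot_self M hv s, ?_, ?_⟩
  · intro h
    apply h2
    have hv2 : v = srefl M s (sroot t) := by rw [← h, srefl_srefl]
    rw [srefl_sroot_of_three M hts] at hv2
    rw [hv2, add_comm]
  · intro h
    apply h1
    have hv2 : v = srefl M s (sroot s + sroot t) := by rw [← h, srefl_srefl]
    rwa [srefl_gamma_of_three M hst] at hv2

end Braid3

section Braid3b

variable [Fintype I] [DecidableEq I] (M : CoxM I) (R : Type) [CommRing R] (a b c d : R)

set_option maxHeartbeats 1000000 in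
theorem phi_braid3_aux (hs : M.Small) {i j : I} (h3 : M.m i j = 3) (hij : i ≠ j)
    (hrel : d * (a - d) + b * c = 0) (α : Pos M)
    (hαi : α.1 ≠ sroot i) (hαj : α.1 ≠ sroot j) (hαγ : α.1 ≠ sroot i + sroot j)
    (hx : bform M α.1 (sroot i) ≤ 0) :
    phi M R a b c d i (phi M R a b c d j (phi M R a b c d i (ev M R α))) =
      phi M R a b c d j (phi M R a b c d i (phi M R a b c d j (ev M R α))) := by
  have hji3 : M.m j i = 3 := by rw [M.symm]; exact h3
  have hcf : cf M i j = -1 := cf_of_three M h3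
  have hcf' : cf M j i = -1 := cf_of_three M hji3
  have hαγ' : α.1 ≠ sroot j + sroot i := by rw [add_comm]; exact hαγ
  obtain ⟨Ai1, Ai2, Ai3⟩ := srefl_avoid M hs h3 α.2 hαj hαγ
  obtain ⟨Bj1, Bj2, Bj3⟩ := srefl_avoid M hs hji3 α.2 hαi hαγ'
  have hsiP : IsPos M (srefl M i α.1) := srefl_pos M hs α.2 hαi
  have hsjP : IsPos M (srefl M j α.1) := srefl_pos M hs α.2 hαj
  have Ai3' : srefl M i α.1 ≠ sroot j + sroot i := by rw [add_comm]; exact Ai3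
  have Bj3' : srefl M j α.1 ≠ sroot i + sroot j := by rw [add_comm]; exact Bj3
  obtain ⟨C1, C2, C3⟩ := srefl_avoid M hs hji3 hsiP Ai1 Ai3'
  obtain ⟨D1, D2, D3⟩ := srefl_avoid M hs h3 hsjP Bj1 Bj3'
  have hsjsiP : IsPos M (srefl M j (srefl M i α.1)) := srefl_pos M hs hsiP Ai2
  have hsisjP : IsPos M (srefl M i (srefl M j α.1)) := srefl_pos M hs hsjP Bj2
  have hstsP : IsPos M (srefl M i (srefl M j (srefl M i α.1))) := srefl_pos M hs hsjsiP C2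
  have hsts'P : IsPos M (srefl M j (srefl M i (srefl M j α.1))) := srefl_pos M hs hsisjP D2
  have hcross3 : (⟨srefl M i (srefl M j (srefl M i α.1)), hstsP⟩ : Pos M)
      = ⟨srefl M j (srefl M i (srefl M j α.1)), hsts'P⟩ :=
    Subtype.ext (srefl_braid M hcf α.1)
  have bsii : bform M (srefl M i α.1) (sroot i) = -(bform M α.1 (sroot i)) :=
    bform_srefl_self M i α.1
  have bsij : bform M (srefl M i α.1) (sroot j)
      = bform M α.1 (sroot j) + bform M α.1 (sroot i) := by
    rw [bform_srefl_other, hcf]; ring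
  have bsji : bform M (srefl M j α.1) (sroot i)
      = bform M α.1 (sroot i) + bform M α.1 (sroot j) := by
    rw [bform_srefl_other, hcf']; ring
  have bsjj : bform M (srefl M j α.1) (sroot j) = -(bform M α.1 (sroot j)) :=
    bform_srefl_self M j α.1
  have bsjsi_i : bform M (srefl M j (srefl M i α.1)) (sroot i)
      = bform M α.1 (sroot j) := by
    rw [bform_srefl_other, hcf', bsii, bsij]; ring
  have bsjsi_j : bform M (srefl M j (srefl M i α.1)) (sroot j)
      = -(bform M α.1 (sroot j) + bform M α.1 (sroot i)) := by
    rw [bform_srefl_self, bsij]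
  have bsisj_i : bform M (srefl M i (srefl M j α.1)) (sroot i)
      = -(bform M α.1 (sroot i) + bform M α.1 (sroot j)) := by
    rw [bform_srefl_self, bsji]
  have bsisj_j : bform M (srefl M i (srefl M j α.1)) (sroot j)
      = bform M α.1 (sroot i) := by
    rw [bform_srefl_other, hcf, bsjj, bsji]; ring
  rcases lt_or_eq_of_le hx with hxlt | hxeq
  · -- x < 0
    have Li_α : phi M R a b c d i (ev M R α)
        = a • ev M R α + c • ev M R ⟨srefl M i α.1, hsiP⟩ :=
      phi_ev_up' M R a b c d hs i α _ hxlt rfl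
    have Li_P1 : phi M R a b c d i (ev M R ⟨srefl M i α.1, hsiP⟩) = b • ev M R α :=
      phi_ev_down' M R a b c d hs i _ α (by rw [bsii]; linarith) Ai1
        (srefl_srefl M i α.1).symm
    rcases lt_trichotomy (bform M α.1 (sroot j)) 0 with hy | hy | hy
    · -- x<0, y<0
      have Lj_α : phi M R a b c d j (ev M R α)
          = a • ev M R α + c • ev M R ⟨srefl M j α.1, hsjP⟩ :=
        phi_ev_up' M R a b c d hs j α _ hy rfl
      have Lj_P1 : phi M R a b c d j (ev M R ⟨srefl M i α.1, hsiP⟩)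
          = a • ev M R ⟨srefl M i α.1, hsiP⟩
            + c • ev M R ⟨srefl M j (srefl M i α.1), hsjsiP⟩ :=
        phi_ev_up' M R a b c d hs j _ _ (by rw [bsij]; linarith) rfl
      have Li_P2 : phi M R a b c d i (ev M R ⟨srefl M j α.1, hsjP⟩)
          = a • ev M R ⟨srefl M j α.1, hsjP⟩
            + c • ev M R ⟨srefl M i (srefl M j α.1), hsisjP⟩ :=
        phi_ev_up' M R a b c d hs i _ _ (by rw [bsji]; linarith) rfl
      have Lj_P2 : phi M R a b c d j (ev M R ⟨srefl M j α.1, hsjP⟩) = b • ev M R α :=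
        phi_ev_down' M R a b c d hs j _ α (by rw [bsjj]; linarith) Bj1
          (srefl_srefl M j α.1).symm
      have Li_P21 : phi M R a b c d i (ev M R ⟨srefl M j (srefl M i α.1), hsjsiP⟩)
          = a • ev M R ⟨srefl M j (srefl M i α.1), hsjsiP⟩
            + c • ev M R ⟨srefl M i (srefl M j (srefl M i α.1)), hstsP⟩ :=
        phi_ev_up' M R a b c d hs i _ _ (by rw [bsjsi_i]; linarith) rfl
      have Lj_P12 : phi M R a b c d j (ev M R ⟨srefl M i (srefl M j α.1), hsisjP⟩)
          = a • ev M R ⟨srefl M i (srefl M j α.1), hsisjP⟩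
            + c • ev M R ⟨srefl M j (srefl M i (srefl M j α.1)), hsts'P⟩ :=
        phi_ev_up' M R a b c d hs j _ _ (by rw [bsisj_j]; linarith) rfl
      simp only [map_add, map_smul, Li_α, Lj_α, Lj_P1, Li_P2, Li_P1, Lj_P2, Li_P21,
        Lj_P12, hcross3]
      module
    · -- x<0, y=0
      have Lj_α : phi M R a b c d j (ev M R α) = d • ev M R α :=
        phi_ev_fix M R a b c d j α hy
      have Lj_P1 : phi M R a b c d j (ev M R ⟨srefl M i α.1, hsiP⟩)
          = a • ev M R ⟨srefl M i α.1, hsiP⟩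
            + c • ev M R ⟨srefl M j (srefl M i α.1), hsjsiP⟩ :=
        phi_ev_up' M R a b c d hs j _ _ (by rw [bsij]; linarith) rfl
      have Li_P21 : phi M R a b c d i (ev M R ⟨srefl M j (srefl M i α.1), hsjsiP⟩)
          = d • ev M R ⟨srefl M j (srefl M i α.1), hsjsiP⟩ :=
        phi_ev_fix M R a b c d i _ (by rw [bsjsi_i]; linarith)
      simp only [map_add, map_smul, Li_α, Lj_α, Lj_P1, Li_P1, Li_P21]
      match_scalars <;> first | ring1 | linear_combination a * hrel |
        linear_combination (-a) * hrel
    · -- x<0, y>0 : cases on x+y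
      have Lj_α : phi M R a b c d j (ev M R α) = b • ev M R ⟨srefl M j α.1, hsjP⟩ :=
        phi_ev_down' M R a b c d hs j α _ hy hαj rfl
      rcases lt_trichotomy (bform M α.1 (sroot i) + bform M α.1 (sroot j)) 0
        with hxy | hxy | hxy
      · -- x+y < 0
        have Lj_P1 : phi M R a b c d j (ev M R ⟨srefl M i α.1, hsiP⟩)
            = a • ev M R ⟨srefl M i α.1, hsiP⟩
              + c • ev M R ⟨srefl M j (srefl M i α.1), hsjsiP⟩ :=
          phi_ev_up' M R a b c d hs j _ _ (by rw [bsij]; linarith) rfl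
        have Li_P21 : phi M R a b c d i (ev M R ⟨srefl M j (srefl M i α.1), hsjsiP⟩)
            = b • ev M R ⟨srefl M i (srefl M j (srefl M i α.1)), hstsP⟩ :=
          phi_ev_down' M R a b c d hs i _ _ (by rw [bsjsi_i]; linarith) C2 rfl
        have Li_P2 : phi M R a b c d i (ev M R ⟨srefl M j α.1, hsjP⟩)
            = a • ev M R ⟨srefl M j α.1, hsjP⟩
              + c • ev M R ⟨srefl M i (srefl M j α.1), hsisjP⟩ :=
          phi_ev_up' M R a b c d hs i _ _ (by rw [bsji]; linarith) rfl
        have Lj_P2 : phi M R a b c d j (ev M R ⟨srefl M j α.1, hsjP⟩)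
            = a • ev M R ⟨srefl M j α.1, hsjP⟩ + c • ev M R α :=
          phi_ev_up' M R a b c d hs j _ α (by rw [bsjj]; linarith)
            (srefl_srefl M j α.1).symm
        have Lj_P12 : phi M R a b c d j (ev M R ⟨srefl M i (srefl M j α.1), hsisjP⟩)
            = a • ev M R ⟨srefl M i (srefl M j α.1), hsisjP⟩
              + c • ev M R ⟨srefl M j (srefl M i (srefl M j α.1)), hsts'P⟩ :=
          phi_ev_up' M R a b c d hs j _ _ (by rw [bsisj_j]; linarith) rfl
        simp only [map_add, map_smul, Li_α, Lj_α, Lj_P1, Li_P2, Li_P1, Lj_P2, Li_P21,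
          Lj_P12, hcross3]
        module
      · -- x+y = 0
        have Lj_P1 : phi M R a b c d j (ev M R ⟨srefl M i α.1, hsiP⟩)
            = d • ev M R ⟨srefl M i α.1, hsiP⟩ :=
          phi_ev_fix M R a b c d j _ (by rw [bsij]; linarith)
        have Li_P2 : phi M R a b c d i (ev M R ⟨srefl M j α.1, hsjP⟩)
            = d • ev M R ⟨srefl M j α.1, hsjP⟩ :=
          phi_ev_fix M R a b c d i _ (by rw [bsji]; linarith)
        have Lj_P2 : phi M R a b c d j (ev M R ⟨srefl M j α.1, hsjP⟩)
            = a • ev M R ⟨srefl M j α.1, hsjP⟩ + c • ev M R α :=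
          phi_ev_up' M R a b c d hs j _ α (by rw [bsjj]; linarith)
            (srefl_srefl M j α.1).symm
        simp only [map_add, map_smul, Li_α, Lj_α, Lj_P1, Li_P2, Li_P1, Lj_P2]
        module
      · -- x+y > 0
        have Lj_P1 : phi M R a b c d j (ev M R ⟨srefl M i α.1, hsiP⟩)
            = b • ev M R ⟨srefl M j (srefl M i α.1), hsjsiP⟩ :=
          phi_ev_down' M R a b c d hs j _ _ (by rw [bsij]; linarith) Ai2 rfl
        have Li_P2 : phi M R a b c d i (ev M R ⟨srefl M j α.1, hsjP⟩)
            = b • ev M R ⟨srefl M i (srefl M j α.1), hsisjP⟩ :=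
          phi_ev_down' M R a b c d hs i _ _ (by rw [bsji]; linarith) Bj2 rfl
        have Li_P21 : phi M R a b c d i (ev M R ⟨srefl M j (srefl M i α.1), hsjsiP⟩)
            = b • ev M R ⟨srefl M i (srefl M j (srefl M i α.1)), hstsP⟩ :=
          phi_ev_down' M R a b c d hs i _ _ (by rw [bsjsi_i]; linarith) C2 rfl
        have Lj_P12 : phi M R a b c d j (ev M R ⟨srefl M i (srefl M j α.1), hsisjP⟩)
            = a • ev M R ⟨srefl M i (srefl M j α.1), hsisjP⟩
              + c • ev M R ⟨srefl M j (srefl M i (srefl M j α.1)), hsts'P⟩ :=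
          phi_ev_up' M R a b c d hs j _ _ (by rw [bsisj_j]; linarith) rfl
        simp only [map_add, map_smul, Li_α, Lj_α, Lj_P1, Li_P2, Li_P1, Li_P21,
          Lj_P12, hcross3]
        module
  · -- x = 0
    have hx0 : bform M α.1 (sroot i) = 0 := hxeq
    have Li_α : phi M R a b c d i (ev M R α) = d • ev M R α :=
      phi_ev_fix M R a b c d i α hx0
    rcases lt_trichotomy (bform M α.1 (sroot j)) 0 with hy | hy | hy
    · -- x=0, y<0
      have Lj_α : phi M R a b c d j (ev M R α)
          = a • ev M R α + c • ev M R ⟨srefl M j α.1, hsjP⟩ :=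
        phi_ev_up' M R a b c d hs j α _ hy rfl
      have Li_P2 : phi M R a b c d i (ev M R ⟨srefl M j α.1, hsjP⟩)
          = a • ev M R ⟨srefl M j α.1, hsjP⟩
            + c • ev M R ⟨srefl M i (srefl M j α.1), hsisjP⟩ :=
        phi_ev_up' M R a b c d hs i _ _ (by rw [bsji]; linarith) rfl
      have Lj_P2 : phi M R a b c d j (ev M R ⟨srefl M j α.1, hsjP⟩) = b • ev M R α :=
        phi_ev_down' M R a b c d hs j _ α (by rw [bsjj]; linarith) Bj1
          (srefl_srefl M j α.1).symm
      have Lj_P12 : phi M R a b c d j (ev M R ⟨srefl M i (srefl M j α.1), hsisjP⟩)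
          = d • ev M R ⟨srefl M i (srefl M j α.1), hsisjP⟩ :=
        phi_ev_fix M R a b c d j _ (by rw [bsisj_j]; linarith)
      simp only [map_add, map_smul, Li_α, Lj_α, Li_P2, Lj_P2, Lj_P12]
      match_scalars <;> first | ring1 | linear_combination a * hrel |
        linear_combination (-a) * hrel
    · -- x=0, y=0
      have Lj_α : phi M R a b c d j (ev M R α) = d • ev M R α :=
        phi_ev_fix M R a b c d j α hy
      simp only [map_smul, Li_α, Lj_α]
    · -- x=0, y>0
      have Lj_α : phi M R a b c d j (ev M R α) = b • ev M R ⟨srefl M j α.1, hsjP⟩ :=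
        phi_ev_down' M R a b c d hs j α _ hy hαj rfl
      have Li_P2 : phi M R a b c d i (ev M R ⟨srefl M j α.1, hsjP⟩)
          = b • ev M R ⟨srefl M i (srefl M j α.1), hsisjP⟩ :=
        phi_ev_down' M R a b c d hs i _ _ (by rw [bsji]; linarith) Bj2 rfl
      have Lj_P12 : phi M R a b c d j (ev M R ⟨srefl M i (srefl M j α.1), hsisjP⟩)
          = d • ev M R ⟨srefl M i (srefl M j α.1), hsisjP⟩ :=
        phi_ev_fix M R a b c d j _ (by rw [bsisj_j]; linarith)
      simp only [map_add, map_smul, Li_α, Lj_α, Li_P2, Lj_P12]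
      module

end Braid3b

section Braid3c

variable [Fintype I] [DecidableEq I] (M : CoxM I) (R : Type) [CommRing R] (a b c d : R)

theorem sroot_ne_gamma' (i j : I) : (sroot j : I → ℝ) ≠ sroot i + sroot j := by
  rw [add_comm]; exact sroot_ne_gamma j i

set_option maxHeartbeats 1000000 in
theorem phi_braid3_ev (hs : M.Small) {i j : I} (h3 : M.m i j = 3) (hij : i ≠ j)
    (hrel : d * (a - d) + b * c = 0) (α : Pos M) :
    phi M R a b c d i (phi M R a b c d j (phi M R a b c d i (ev M R α))) =
      phi M R a b c d j (phi M R a b c d i (phi M R a b c d j (ev M R α))) := by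
  have hji3 : M.m j i = 3 := by rw [M.symm]; exact h3
  have hcf : cf M i j = -1 := cf_of_three M h3
  have hcf' : cf M j i = -1 := cf_of_three M hji3
  have hγPos : IsPos M (sroot i + sroot j) := by
    rw [← srefl_sroot_of_three M h3]
    exact srefl_pos M hs (isPos_sroot M i) (sroot_ne hij)
  by_cases hαi : α.1 = sroot i
  · have e0 : α = simplePos M i := Subtype.ext hαi
    subst e0
    have Li_s : phi M R a b c d i (ev M R (simplePos M i)) = 0 :=
      phi_ev_self M R a b c d i
    have Lj_s : phi M R a b c d j (ev M R (simplePos M i))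
        = a • ev M R (simplePos M i) + c • ev M R ⟨sroot i + sroot j, hγPos⟩ :=
      phi_ev_up' M R a b c d hs j (simplePos M i) _
        (by show bform M (sroot i) (sroot j) < 0; rw [bform_sroot_sroot, hcf]; norm_num)
        (srefl_sroot_of_three M h3).symm
    have Li_γ : phi M R a b c d i (ev M R ⟨sroot i + sroot j, hγPos⟩)
        = b • ev M R (simplePos M j) :=
      phi_ev_down' M R a b c d hs i _ (simplePos M j)
        (by show 0 < bform M (sroot i + sroot j) (sroot i)
            rw [bform_add_left, bform_sroot_sroot, bform_sroot_sroot, cf_self, hcf']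
            norm_num)
        (Ne.symm (sroot_ne_gamma i j)) (srefl_gamma_of_three M h3).symm
    have Lj_sj : phi M R a b c d j (ev M R (simplePos M j)) = 0 :=
      phi_ev_self M R a b c d j
    simp only [Li_s, Lj_s, map_add, map_smul, map_zero, smul_zero, Li_γ, Lj_sj,
      zero_add, add_zero]
  by_cases hαj : α.1 = sroot j
  · have e0 : α = simplePos M j := Subtype.ext hαj
    subst e0
    have Lj_s : phi M R a b c d j (ev M R (simplePos M j)) = 0 :=
      phi_ev_self M R a b c d j
    have Li_s : phi M R a b c d i (ev M R (simplePos M j))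
        = a • ev M R (simplePos M j) + c • ev M R ⟨sroot i + sroot j, hγPos⟩ :=
      phi_ev_up' M R a b c d hs i (simplePos M j) _
        (by show bform M (sroot j) (sroot i) < 0; rw [bform_sroot_sroot, hcf']; norm_num)
        (by show (sroot i + sroot j : I → ℝ) = srefl M i (sroot j)
            rw [srefl_sroot_of_three M hji3, add_comm])
    have Lj_γ : phi M R a b c d j (ev M R ⟨sroot i + sroot j, hγPos⟩)
        = b • ev M R (simplePos M i) :=
      phi_ev_down' M R a b c d hs j _ (simplePos M i)
        (by show 0 < bform M (sroot i + sroot j) (sroot j)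
            rw [bform_add_left, bform_sroot_sroot, bform_sroot_sroot, cf_self, hcf]
            norm_num)
        (Ne.symm (sroot_ne_gamma' i j))
        (by show (sroot i : I → ℝ) = srefl M j (sroot i + sroot j)
            rw [show (sroot i + sroot j : I → ℝ) = sroot j + sroot i from add_comm _ _,
              srefl_gamma_of_three M hji3])
    have Li_si : phi M R a b c d i (ev M R (simplePos M i)) = 0 :=
      phi_ev_self M R a b c d i
    simp only [Li_s, Lj_s, map_add, map_smul, map_zero, smul_zero, Lj_γ, Li_si,
      zero_add, add_zero]
  by_cases hαγ : α.1 = sroot i + sroot j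
  · have e0 : α = ⟨sroot i + sroot j, hγPos⟩ := Subtype.ext hαγ
    subst e0
    have Li_γ : phi M R a b c d i (ev M R ⟨sroot i + sroot j, hγPos⟩)
        = b • ev M R (simplePos M j) :=
      phi_ev_down' M R a b c d hs i _ (simplePos M j)
        (by show 0 < bform M (sroot i + sroot j) (sroot i)
            rw [bform_add_left, bform_sroot_sroot, bform_sroot_sroot, cf_self, hcf']
            norm_num)
        (Ne.symm (sroot_ne_gamma i j)) (srefl_gamma_of_three M h3).symm
    have Lj_γ : phi M R a b c d j (ev M R ⟨sroot i + sroot j, hγPos⟩)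
        = b • ev M R (simplePos M i) :=
      phi_ev_down' M R a b c d hs j _ (simplePos M i)
        (by show 0 < bform M (sroot i + sroot j) (sroot j)
            rw [bform_add_left, bform_sroot_sroot, bform_sroot_sroot, cf_self, hcf]
            norm_num)
        (Ne.symm (sroot_ne_gamma' i j))
        (by show (sroot i : I → ℝ) = srefl M j (sroot i + sroot j)
            rw [show (sroot i + sroot j : I → ℝ) = sroot j + sroot i from add_comm _ _,
              srefl_gamma_of_three M hji3])
    have Li_si : phi M R a b c d i (ev M R (simplePos M i)) = 0 :=
      phi_ev_self M R a b c d i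
    have Lj_sj : phi M R a b c d j (ev M R (simplePos M j)) = 0 :=
      phi_ev_self M R a b c d j
    simp only [Li_γ, Lj_γ, map_add, map_smul, map_zero, smul_zero, Li_si, Lj_sj,
      zero_add, add_zero]
  -- generic case
  rcases le_or_gt (bform M α.1 (sroot i)) 0 with hx | hx
  · exact phi_braid3_aux M R a b c d hs h3 hij hrel α hαi hαj hαγ hx
  rcases le_or_gt (bform M α.1 (sroot j)) 0 with hy | hy
  · exact (phi_braid3_aux M R a b c d hs hji3 hij.symm hrel α hαj hαi
      (by rw [add_comm]; exact hαγ) hy).symm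
  -- x > 0, y > 0
  have hαγ' : α.1 ≠ sroot j + sroot i := by rw [add_comm]; exact hαγ
  obtain ⟨Ai1, Ai2, Ai3⟩ := srefl_avoid M hs h3 α.2 hαj hαγ
  obtain ⟨Bj1, Bj2, Bj3⟩ := srefl_avoid M hs hji3 α.2 hαi hαγ'
  have hsiP : IsPos M (srefl M i α.1) := srefl_pos M hs α.2 hαi
  have hsjP : IsPos M (srefl M j α.1) := srefl_pos M hs α.2 hαj
  have Ai3' : srefl M i α.1 ≠ sroot j + sroot i := by rw [add_comm]; exact Ai3
  have Bj3' : srefl M j α.1 ≠ sroot i + sroot j := by rw [add_comm]; exact Bj3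
  obtain ⟨C1, C2, C3⟩ := srefl_avoid M hs hji3 hsiP Ai1 Ai3'
  obtain ⟨D1, D2, D3⟩ := srefl_avoid M hs h3 hsjP Bj1 Bj3'
  have hsjsiP : IsPos M (srefl M j (srefl M i α.1)) := srefl_pos M hs hsiP Ai2
  have hsisjP : IsPos M (srefl M i (srefl M j α.1)) := srefl_pos M hs hsjP Bj2
  have hstsP : IsPos M (srefl M i (srefl M j (srefl M i α.1))) := srefl_pos M hs hsjsiP C2
  have hsts'P : IsPos M (srefl M j (srefl M i (srefl M j α.1))) := srefl_pos M hs hsisjP D2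
  have hcross3 : (⟨srefl M i (srefl M j (srefl M i α.1)), hstsP⟩ : Pos M)
      = ⟨srefl M j (srefl M i (srefl M j α.1)), hsts'P⟩ :=
    Subtype.ext (srefl_braid M hcf α.1)
  have bsij : bform M (srefl M i α.1) (sroot j)
      = bform M α.1 (sroot j) + bform M α.1 (sroot i) := by
    rw [bform_srefl_other, hcf]; ring
  have bsji : bform M (srefl M j α.1) (sroot i)
      = bform M α.1 (sroot i) + bform M α.1 (sroot j) := by
    rw [bform_srefl_other, hcf']; ring
  have bsjsi_i : bform M (srefl M j (srefl M i α.1)) (sroot i)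
      = bform M α.1 (sroot j) := by
    rw [bform_srefl_other, hcf', bform_srefl_self, bsij]; ring
  have bsisj_j : bform M (srefl M i (srefl M j α.1)) (sroot j)
      = bform M α.1 (sroot i) := by
    rw [bform_srefl_other, hcf, bform_srefl_self, bsji]; ring
  have Li_α : phi M R a b c d i (ev M R α) = b • ev M R ⟨srefl M i α.1, hsiP⟩ :=
    phi_ev_down' M R a b c d hs i α _ hx hαi rfl
  have Lj_α : phi M R a b c d j (ev M R α) = b • ev M R ⟨srefl M j α.1, hsjP⟩ :=
    phi_ev_down' M R a b c d hs j α _ hy hαj rfl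
  have Lj_P1 : phi M R a b c d j (ev M R ⟨srefl M i α.1, hsiP⟩)
      = b • ev M R ⟨srefl M j (srefl M i α.1), hsjsiP⟩ :=
    phi_ev_down' M R a b c d hs j _ _ (by rw [bsij]; linarith) Ai2 rfl
  have Li_P2 : phi M R a b c d i (ev M R ⟨srefl M j α.1, hsjP⟩)
      = b • ev M R ⟨srefl M i (srefl M j α.1), hsisjP⟩ :=
    phi_ev_down' M R a b c d hs i _ _ (by rw [bsji]; linarith) Bj2 rfl
  have Li_P21 : phi M R a b c d i (ev M R ⟨srefl M j (srefl M i α.1), hsjsiP⟩)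
      = b • ev M R ⟨srefl M i (srefl M j (srefl M i α.1)), hstsP⟩ :=
    phi_ev_down' M R a b c d hs i _ _ (by rw [bsjsi_i]; linarith) C2 rfl
  have Lj_P12 : phi M R a b c d j (ev M R ⟨srefl M i (srefl M j α.1), hsisjP⟩)
      = b • ev M R ⟨srefl M j (srefl M i (srefl M j α.1)), hsts'P⟩ :=
    phi_ev_down' M R a b c d hs j _ _ (by rw [bsisj_j]; linarith) D2 rfl
  simp only [map_smul, Li_α, Lj_α, Lj_P1, Li_P2, Li_P21, Lj_P12, hcross3]

end Braid3c


section Assembly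

variable [Fintype I] [DecidableEq I] (M : CoxM I) (R : Type) [CommRing R] (a b c d : R)

theorem ev_ext {N : Type} [AddCommMonoid N] [Module R N] {F G : VV M R →ₗ[R] N}
    (h : ∀ α, F (ev M R α) = G (ev M R α)) : F = G := by
  apply Finsupp.lhom_ext
  intro α r
  have hr : (Finsupp.single α r : VV M R) = r • ev M R α := by
    rw [ev, Finsupp.smul_single, smul_eq_mul, mul_one]
  rw [hr, map_smul, map_smul, h]

theorem g_phi_sq_ev (hs : M.Small) (hrel : d * (a - d) + b * c = 0) (i : I)
    (g : VV M R →ₗ[R] R) (hg : g (ev M R (simplePos M i)) = 0) (α : Pos M) :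
    g (phi M R a b c d i (phi M R a b c d i (ev M R α)))
      = a * g (phi M R a b c d i (ev M R α)) + (b * c) * g (ev M R α) := by
  by_cases hαi : α.1 = sroot i
  · have e0 : α = simplePos M i := Subtype.ext hαi
    subst e0
    rw [phi_ev_self, map_zero, map_zero, hg]
    ring
  rcases lt_trichotomy (bform M α.1 (sroot i)) 0 with hx | hx | hx
  · have hsiP : IsPos M (srefl M i α.1) := srefl_pos M hs α.2 hαi
    have L : phi M R a b c d i (ev M R α)
        = a • ev M R α + c • ev M R ⟨srefl M i α.1, hsiP⟩ :=
      phi_ev_up' M R a b c d hs i α _ hx rfl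
    have L2 : phi M R a b c d i (ev M R ⟨srefl M i α.1, hsiP⟩) = b • ev M R α :=
      phi_ev_down' M R a b c d hs i _ α
        (by rw [bform_srefl_self]; linarith) (srefl_ne_sroot_self M α.2 i)
        (srefl_srefl M i α.1).symm
    simp only [L, L2, map_add, map_smul, smul_eq_mul]
    ring
  · have L : phi M R a b c d i (ev M R α) = d • ev M R α :=
      phi_ev_fix M R a b c d i α hx
    simp only [L, map_smul, smul_eq_mul]
    linear_combination (- g (ev M R α)) * hrel
  · have hsiP : IsPos M (srefl M i α.1) := srefl_pos M hs α.2 hαi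
    have L : phi M R a b c d i (ev M R α) = b • ev M R ⟨srefl M i α.1, hsiP⟩ :=
      phi_ev_down' M R a b c d hs i α _ hx hαi rfl
    have L2 : phi M R a b c d i (ev M R ⟨srefl M i α.1, hsiP⟩)
        = a • ev M R ⟨srefl M i α.1, hsiP⟩ + c • ev M R α :=
      phi_ev_up' M R a b c d hs i _ α
        (by rw [bform_srefl_self]; linarith) (srefl_srefl M i α.1).symm
    simp only [L, L2, map_add, map_smul, smul_eq_mul]
    ring

theorem g_phi_sq (hs : M.Small) (hrel : d * (a - d) + b * c = 0) (i : I)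
    (g : VV M R →ₗ[R] R) (hg : g (ev M R (simplePos M i)) = 0) (v : VV M R) :
    g (phi M R a b c d i (phi M R a b c d i v))
      = a * g (phi M R a b c d i v) + (b * c) * g v := by
  have hF : (g.comp ((phi M R a b c d i).comp (phi M R a b c d i)))
      = a • (g.comp (phi M R a b c d i)) + (b * c) • g := by
    apply ev_ext
    intro α
    simp only [LinearMap.comp_apply, LinearMap.add_apply, LinearMap.smul_apply, smul_eq_mul]
    exact g_phi_sq_ev M R a b c d hs hrel i g hg α
  have h := LinearMap.congr_fun hF v
  simpa only [LinearMap.comp_apply, LinearMap.add_apply, LinearMap.smul_apply,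
    smul_eq_mul] using h

theorem gamma_isPos (hs : M.Small) {i j : I} (h3 : M.m i j = 3) (hij : i ≠ j) :
    IsPos M (sroot i + sroot j) := by
  rw [← srefl_sroot_of_three M h3]
  exact srefl_pos M hs (isPos_sroot M i) (sroot_ne hij)

theorem psim_diff2 (hs : M.Small) {i j : I} (h2 : M.m i j = 2) (hij : i ≠ j)
    (f : I → (VV M R →ₗ[R] R))
    (hfi : f i (ev M R (simplePos M j)) = 0) (hfj : f j (ev M R (simplePos M i)) = 0)
    (v : VV M R) :
    psim M R a b c d f i (psim M R a b c d f j v)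
        - psim M R a b c d f j (psim M R a b c d f i v)
      = (f i (phi M R a b c d j v) - d * f i v) • ev M R (simplePos M i)
        - (f j (phi M R a b c d i v) - d * f j v) • ev M R (simplePos M j) := by
  have hji : M.m j i = 2 := by rw [M.symm]; exact h2
  have hφij : phi M R a b c d i (ev M R (simplePos M j)) = d • ev M R (simplePos M j) :=
    phi_ev_fix M R a b c d i (simplePos M j)
      (by show bform M (sroot j) (sroot i) = 0; rw [bform_sroot_sroot, cf_of_two M hji])
  have hφji : phi M R a b c d j (ev M R (simplePos M i)) = d • ev M R (simplePos M i) :=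
    phi_ev_fix M R a b c d j (simplePos M i)
      (by show bform M (sroot i) (sroot j) = 0; rw [bform_sroot_sroot, cf_of_two M h2])
  have hcommC : (phi M R a b c d i).comp (phi M R a b c d j)
      = (phi M R a b c d j).comp (phi M R a b c d i) := by
    apply ev_ext
    intro α
    simp only [LinearMap.comp_apply]
    exact phi_comm2_ev M R a b c d hs h2 hij α
  have hcomm := LinearMap.congr_fun hcommC v
  simp only [LinearMap.comp_apply] at hcomm
  simp only [psim, LinearMap.add_apply, LinearMap.smulRight_apply, map_add, map_smul,
    hφij, hφji, hfi, hfj, smul_eq_mul, mul_zero, zero_smul, add_zero, smul_zero]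
  rw [hcomm]
  module

theorem psim_diff3 (hs : M.Small) {i j : I} (h3 : M.m i j = 3) (hij : i ≠ j)
    (hrel : d * (a - d) + b * c = 0) (f : I → (VV M R →ₗ[R] R))
    (hfi : f i (ev M R (simplePos M j)) = 0) (hfj : f j (ev M R (simplePos M i)) = 0)
    (v : VV M R) :
    psim M R a b c d f i (psim M R a b c d f j (psim M R a b c d f i v))
        - psim M R a b c d f j (psim M R a b c d f i (psim M R a b c d f j v))
      = (f i (phi M R a b c d j (phi M R a b c d i v))
            + f i v * (a * f i (ev M R (simplePos M i))
              + c * f i (ev M R ⟨sroot i + sroot j, gamma_isPos M hs h3 hij⟩))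
            - (c * b) * f j v - a * f i (phi M R a b c d j v)) • ev M R (simplePos M i)
        + ((c * b) * f i v + a * f j (phi M R a b c d i v)
            - f j (phi M R a b c d i (phi M R a b c d j v))
            - f j v * (a * f j (ev M R (simplePos M j))
              + c * f j (ev M R ⟨sroot i + sroot j, gamma_isPos M hs h3 hij⟩)))
            • ev M R (simplePos M j)
        + (c * f j (phi M R a b c d i v) - c * f i (phi M R a b c d j v))
            • ev M R ⟨sroot i + sroot j, gamma_isPos M hs h3 hij⟩ := by
  have hji3 : M.m j i = 3 := by rw [M.symm]; exact h3
  have hcf : cf M i j = -1 := cf_of_three M h3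
  have hcf' : cf M j i = -1 := cf_of_three M hji3
  have hγPos : IsPos M (sroot i + sroot j) := gamma_isPos M hs h3 hij
  have Lφii : phi M R a b c d i (ev M R (simplePos M i)) = 0 := phi_ev_self M R a b c d i
  have Lφjj : phi M R a b c d j (ev M R (simplePos M j)) = 0 := phi_ev_self M R a b c d j
  have Lφji : phi M R a b c d j (ev M R (simplePos M i))
      = a • ev M R (simplePos M i) + c • ev M R ⟨sroot i + sroot j, hγPos⟩ :=
    phi_ev_up' M R a b c d hs j (simplePos M i) _
      (by show bform M (sroot i) (sroot j) < 0; rw [bform_sroot_sroot, hcf]; norm_num)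
      (srefl_sroot_of_three M h3).symm
  have Lφij : phi M R a b c d i (ev M R (simplePos M j))
      = a • ev M R (simplePos M j) + c • ev M R ⟨sroot i + sroot j, hγPos⟩ :=
    phi_ev_up' M R a b c d hs i (simplePos M j) _
      (by show bform M (sroot j) (sroot i) < 0; rw [bform_sroot_sroot, hcf']; norm_num)
      (by show (sroot i + sroot j : I → ℝ) = srefl M i (sroot j)
          rw [srefl_sroot_of_three M hji3, add_comm])
  have Lφiγ : phi M R a b c d i (ev M R ⟨sroot i + sroot j, hγPos⟩)
      = b • ev M R (simplePos M j) :=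
    phi_ev_down' M R a b c d hs i _ (simplePos M j)
      (by show 0 < bform M (sroot i + sroot j) (sroot i)
          rw [bform_add_left, bform_sroot_sroot, bform_sroot_sroot, cf_self, hcf']
          norm_num)
      (Ne.symm (sroot_ne_gamma i j)) (srefl_gamma_of_three M h3).symm
  have Lφjγ : phi M R a b c d j (ev M R ⟨sroot i + sroot j, hγPos⟩)
      = b • ev M R (simplePos M i) :=
    phi_ev_down' M R a b c d hs j _ (simplePos M i)
      (by show 0 < bform M (sroot i + sroot j) (sroot j)
          rw [bform_add_left, bform_sroot_sroot, bform_sroot_sroot, cf_self, hcf]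
          norm_num)
      (Ne.symm (sroot_ne_gamma' i j))
      (by show (sroot i : I → ℝ) = srefl M j (sroot i + sroot j)
          rw [show (sroot i + sroot j : I → ℝ) = sroot j + sroot i from add_comm _ _,
            srefl_gamma_of_three M hji3])
  have hbrC : (phi M R a b c d i).comp ((phi M R a b c d j).comp (phi M R a b c d i))
      = (phi M R a b c d j).comp ((phi M R a b c d i).comp (phi M R a b c d j)) := by
    apply ev_ext
    intro α
    simp only [LinearMap.comp_apply]
    exact phi_braid3_ev M R a b c d hs h3 hij hrel α
  have hbr := LinearMap.congr_fun hbrC v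
  simp only [LinearMap.comp_apply] at hbr
  simp only [psim, LinearMap.add_apply, LinearMap.smulRight_apply, map_add, map_smul,
    Lφii, Lφjj, Lφji, Lφij, Lφiγ, Lφjγ, hfi, hfj, smul_eq_mul, mul_zero, zero_smul,
    add_zero, smul_zero, zero_add, smul_add]
  rw [hbr]
  match_scalars <;> ring

theorem coord_extract3 (γ x y : Pos M) (hne1 : x ≠ γ) (hne2 : y ≠ γ) (A B C : R)
    (h : (0 : VV M R) = A • ev M R x + B • ev M R y + C • ev M R γ) : C = 0 := by
  have h1 := DFunLike.congr_fun h γ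
  simp only [ev, Finsupp.zero_apply, Finsupp.add_apply, Finsupp.smul_apply,
    Finsupp.single_eq_same, Finsupp.single_eq_of_ne' hne1, Finsupp.single_eq_of_ne' hne2,
    smul_eq_mul, mul_one, mul_zero, add_zero, zero_add] at h1
  exact h1.symm

end Assembly

end AuxLK

end LK

open LK in
/-- braid relations for the maps `ψ_i`. -/
theorem statement_3 {I : Type} [Fintype I] [DecidableEq I] (M : CoxM I) (hsmall : M.Small)
    (R : Type) [CommRing R] (a b c d : R) (f : I → (VV M R →ₗ[R] R)) (i j : I) (hij : i ≠ j)
    (hrel : d * (a - d) + b * c = 0)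
    (hfi : f i (ev M R (simplePos M j)) = 0) (hfj : f j (ev M R (simplePos M i)) = 0) :
    (M.m i j = 2 →
      ((psim M R a b c d f i).comp (psim M R a b c d f j)
          = (psim M R a b c d f j).comp (psim M R a b c d f i)
        ↔ ((f i).comp (phi M R a b c d j) = d • f i ∧
           (f j).comp (phi M R a b c d i) = d • f j))) ∧
    (M.m i j = 3 →
      ((f i).comp (phi M R a b c d j) = (f j).comp (phi M R a b c d i) →
        (psim M R a b c d f i).comp ((psim M R a b c d f j).comp (psim M R a b c d f i))
          = (psim M R a b c d f j).comp ((psim M R a b c d f i).comp (psim M R a b c d f j))) ∧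
      (IsUnit c →
        (psim M R a b c d f i).comp ((psim M R a b c d f j).comp (psim M R a b c d f i))
          = (psim M R a b c d f j).comp ((psim M R a b c d f i).comp (psim M R a b c d f j)) →
        (f i).comp (phi M R a b c d j) = (f j).comp (phi M R a b c d i))) := by
  constructor
  · -- m = 2
    intro h2
    constructor
    · intro heq
      have hz : ∀ v : VV M R,
          (f i ((phi M R a b c d j) v) - d * f i v) • ev M R (simplePos M i)
            - (f j ((phi M R a b c d i) v) - d * f j v) • ev M R (simplePos M j) = 0 := by
        intro v
        rw [← psim_diff2 M R a b c d hsmall h2 hij f hfi hfj v]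
        have hv := LinearMap.congr_fun heq v
        simp only [LinearMap.comp_apply] at hv
        rw [hv, sub_self]
      have hnei : (simplePos M j) ≠ (simplePos M i) :=
        fun h => sroot_ne hij (congrArg Subtype.val h).symm
      have hnej : (simplePos M i) ≠ (simplePos M j) :=
        fun h => sroot_ne hij (congrArg Subtype.val h)
      constructor
      · apply LinearMap.ext; intro v
        have h := DFunLike.congr_fun (hz v) (simplePos M i)
        simp only [Finsupp.sub_apply, Finsupp.smul_apply, ev, Finsupp.single_eq_same,
          Finsupp.single_eq_of_ne' hnei, Finsupp.coe_zero, Pi.zero_apply, smul_eq_mul,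
          mul_one, mul_zero, sub_zero] at h
        simp only [LinearMap.comp_apply, LinearMap.smul_apply, smul_eq_mul]
        exact sub_eq_zero.mp h
      · apply LinearMap.ext; intro v
        have h := DFunLike.congr_fun (hz v) (simplePos M j)
        simp only [Finsupp.sub_apply, Finsupp.smul_apply, ev, Finsupp.single_eq_same,
          Finsupp.single_eq_of_ne' hnej, Finsupp.coe_zero, Pi.zero_apply, smul_eq_mul,
          mul_one, mul_zero, zero_sub, neg_eq_zero] at h
        simp only [LinearMap.comp_apply, LinearMap.smul_apply, smul_eq_mul]
        exact sub_eq_zero.mp h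
    · rintro ⟨h1, h2f⟩
      apply LinearMap.ext; intro v
      simp only [LinearMap.comp_apply]
      have hd := psim_diff2 M R a b c d hsmall h2 hij f hfi hfj v
      have e1 : f i ((phi M R a b c d j) v) = d * f i v := by
        have := LinearMap.congr_fun h1 v
        simpa only [LinearMap.comp_apply, LinearMap.smul_apply, smul_eq_mul] using this
      have e2 : f j ((phi M R a b c d i) v) = d * f j v := by
        have := LinearMap.congr_fun h2f v
        simpa only [LinearMap.comp_apply, LinearMap.smul_apply, smul_eq_mul] using this
      rw [e1, e2] at hd
      simp only [sub_self, zero_smul, sub_zero, zero_sub, neg_zero] at hd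
      exact sub_eq_zero.mp hd
  · -- m = 3
    intro h3
    have hji3 : M.m j i = 3 := by rw [M.symm]; exact h3
    have hcf : cf M i j = -1 := cf_of_three M h3
    have hcf' : cf M j i = -1 := cf_of_three M hji3
    have hγPos : IsPos M (sroot i + sroot j) := gamma_isPos M hsmall h3 hij
    have hnegi : (simplePos M i) ≠ (⟨sroot i + sroot j, gamma_isPos M hsmall h3 hij⟩ : Pos M) :=
      fun h => sroot_ne_gamma i j (congrArg Subtype.val h)
    have hnegj : (simplePos M j) ≠ (⟨sroot i + sroot j, gamma_isPos M hsmall h3 hij⟩ : Pos M) :=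
      fun h => sroot_ne_gamma' i j (congrArg Subtype.val h)
    have Lφii : phi M R a b c d i (ev M R (simplePos M i)) = 0 := phi_ev_self M R a b c d i
    have Lφjj : phi M R a b c d j (ev M R (simplePos M j)) = 0 := phi_ev_self M R a b c d j
    have Lφji : phi M R a b c d j (ev M R (simplePos M i))
        = a • ev M R (simplePos M i)
          + c • ev M R ⟨sroot i + sroot j, gamma_isPos M hsmall h3 hij⟩ :=
      phi_ev_up' M R a b c d hsmall j (simplePos M i) _
        (by show bform M (sroot i) (sroot j) < 0; rw [bform_sroot_sroot, hcf]; norm_num)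
        (srefl_sroot_of_three M h3).symm
    have Lφij : phi M R a b c d i (ev M R (simplePos M j))
        = a • ev M R (simplePos M j)
          + c • ev M R ⟨sroot i + sroot j, gamma_isPos M hsmall h3 hij⟩ :=
      phi_ev_up' M R a b c d hsmall i (simplePos M j) _
        (by show bform M (sroot j) (sroot i) < 0; rw [bform_sroot_sroot, hcf']; norm_num)
        (by show (sroot i + sroot j : I → ℝ) = srefl M i (sroot j)
            rw [srefl_sroot_of_three M hji3, add_comm])
    constructor
    · intro hcomp
      have hg : ∀ w, f i (phi M R a b c d j w) = f j (phi M R a b c d i w) := fun w => by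
        have := LinearMap.congr_fun hcomp w
        simpa only [LinearMap.comp_apply] using this
      have hu1 : a * f i (ev M R (simplePos M i))
          + c * f i (ev M R ⟨sroot i + sroot j, gamma_isPos M hsmall h3 hij⟩) = 0 := by
        have h0 := hg (ev M R (simplePos M i))
        rw [Lφji, Lφii, map_zero] at h0
        simpa only [map_add, map_smul, smul_eq_mul] using h0
      have hu2 : a * f j (ev M R (simplePos M j))
          + c * f j (ev M R ⟨sroot i + sroot j, gamma_isPos M hsmall h3 hij⟩) = 0 := by
        have h0 := hg (ev M R (simplePos M j))
        rw [Lφjj, map_zero, Lφij] at h0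
        have h0' := h0.symm
        simpa only [map_add, map_smul, smul_eq_mul] using h0'
      apply LinearMap.ext; intro v
      simp only [LinearMap.comp_apply]
      rw [← sub_eq_zero]
      have hd := psim_diff3 M R a b c d hsmall h3 hij hrel f hfi hfj v
      rw [hg v, hg (phi M R a b c d i v),
        g_phi_sq M R a b c d hsmall hrel i (f j) hfj v,
        ← hg (phi M R a b c d j v),
        g_phi_sq M R a b c d hsmall hrel j (f i) hfi v, hg v] at hd
      rw [hd]
      match_scalars <;>
        first
          | ring1
          | linear_combination (f i v) * hu1
          | linear_combination (-(f j v)) * hu2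
          | linear_combination (f j v) * hu2
    · intro hcu hψ
      apply LinearMap.ext; intro v
      simp only [LinearMap.comp_apply]
      have hd := psim_diff3 M R a b c d hsmall h3 hij hrel f hfi hfj v
      have hv := LinearMap.congr_fun hψ v
      simp only [LinearMap.comp_apply] at hv
      rw [hv, sub_self] at hd
      have hC := coord_extract3 M R (⟨sroot i + sroot j, gamma_isPos M hsmall h3 hij⟩ : Pos M)
        (simplePos M i) (simplePos M j) hnegi hnegj _ _ _ hd
      have h2 : c * f j (phi M R a b c d i v) = c * f i (phi M R a b c d j v) :=
        sub_eq_zero.mp hC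
      exact (hcu.mul_left_cancel h2).symm
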